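/- Consider T = 2 and the economy G_2 degenerate on the realization E^2 with A_1 = {a11, a12}, B_1 = {b11}, A_2 = {a21, a22}, B_2 = {b21, b22}. Suppose the discount factors δ ∈ [0,1) and utilities satisfy: δ_{a11}·u(a11,b21) > u(a11,b22) > u(a11,b11) > δ_{a11}·u(a11,b22) > 0; u(a12,b11) > 0 > max(u(a12,b21), u(a12,b22)); u(a21,b21) > 0 > max(u(a21,b11), u(a21,b22)); u(a22,b22) > u(a22,b21) > 0 > u(a22,b11); v(a11,b11) > v(a12,b11) > 0 > v(a21,b11), v(a22,b11); v(a22,b21) > v(a11,b21) > v(a21,b21) > 0 > v(a12,b21); v(a11,b22) > v(a22,b22) > 0 > max(v(a12,b22), v(a21,b22)). Then both of the following matchings are dynamically stable for G_2: m^L, which in period 1 matches a11 with b11 and in period 2 matches a21 with b21 and a22 with b22 (leaving a12 unmatched throughout); and m^R, which in period 1 matches a12 with b11 and in period 2 matches a11 with b21 and a22 with b22 (leaving a21 unmatched throughout). Consequently a12 is unmatched under m^L but matched under m^R, while a21 is unmatched under m^R but matched under m^L, so the two dynamically stable matchings leave different sets of agents unmatched. -/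

import Mathlib

namespace DynMatch

open scoped Classical

/-- A realization of arrivals of length `t`: in each period `i < t`, the sets of agents
arriving on side `A` and on side `B`; arrival sets are pairwise disjoint on each side. -/
structure Realization (A B : Type) (t : ℕ) where
  arrA : Fin t → Finset A
  arrB : Fin t → Finset B
  disjA : ∀ i j : Fin t, i ≠ j → Disjoint (arrA i) (arrA j)
  disjB : ∀ i j : Fin t, i ≠ j → Disjoint (arrB i) (arrB j)

namespace Realization

variable {A B : Type}

theorem ext' {t : ℕ} {E F : Realization A B t} (hA : E.arrA = F.arrA)
    (hB : E.arrB = F.arrB) : E = F := by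
  cases E; cases F; dsimp at hA hB; subst hA; subst hB; rfl

/-- The truncation of a realization to its first `s` periods. -/
def trunc {t : ℕ} (E : Realization A B t) {s : ℕ} (h : s ≤ t) : Realization A B s where
  arrA i := E.arrA (Fin.castLE h i)
  arrB i := E.arrB (Fin.castLE h i)
  disjA i j hij := E.disjA _ _ fun hc => hij (Fin.castLE_injective h hc)
  disjB i j hij := E.disjB _ _ fun hc => hij (Fin.castLE_injective h hc)

theorem trunc_trunc {t s r : ℕ} (E : Realization A B t) (h : s ≤ t) (h' : r ≤ s) :
    (E.trunc h).trunc h' = E.trunc (h'.trans h) := by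
  apply ext' <;> funext i <;> (simp only [trunc]; congr 1)

/-- Cumulative arrivals on side `A` through period `s`. -/
noncomputable def Abar {t : ℕ} (E : Realization A B t) (s : ℕ) : Finset A :=
  Finset.univ.biUnion fun i : Fin t => if (i : ℕ) < s then E.arrA i else ∅

/-- Cumulative arrivals on side `B` through period `s`. -/
noncomputable def Bbar {t : ℕ} (E : Realization A B t) (s : ℕ) : Finset B :=
  Finset.univ.biUnion fun i : Fin t => if (i : ℕ) < s then E.arrB i else ∅

theorem mem_Abar {t : ℕ} (E : Realization A B t) (s : ℕ) (a : A) :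
    a ∈ E.Abar s ↔ ∃ i : Fin t, (i : ℕ) < s ∧ a ∈ E.arrA i := by
  simp only [Abar, Finset.mem_biUnion, Finset.mem_univ, true_and]
  constructor
  · rintro ⟨i, hi⟩
    by_cases h : (i : ℕ) < s
    · exact ⟨i, h, by simpa [h] using hi⟩
    · simp [h] at hi
  · rintro ⟨i, h, hi⟩
    exact ⟨i, by simp [h, hi]⟩

theorem mem_Bbar {t : ℕ} (E : Realization A B t) (s : ℕ) (b : B) :
    b ∈ E.Bbar s ↔ ∃ i : Fin t, (i : ℕ) < s ∧ b ∈ E.arrB i := by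
  simp only [Bbar, Finset.mem_biUnion, Finset.mem_univ, true_and]
  constructor
  · rintro ⟨i, hi⟩
    by_cases h : (i : ℕ) < s
    · exact ⟨i, h, by simpa [h] using hi⟩
    · simp [h] at hi
  · rintro ⟨i, h, hi⟩
    exact ⟨i, by simp [h, hi]⟩

end Realization

/-- `Follows F E` : the realization `F` follows (extends) the realization `E`,
i.e. `E` is a truncation of `F`. -/
def Follows {A B : Type} {s t : ℕ} (F : Realization A B t) (E : Realization A B s) : Prop :=
  ∃ h : s ≤ t, F.trunc h = E

variable {A B : Type}

/-- A period-`t` matching for the realization `E`: a one-to-one pairing between the agents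
on side `A` and side `B` that have arrived through period `t`; `none` encodes being
unmatched (i.e. matched to oneself). -/
structure PeriodMatching {t : ℕ} (E : Realization A B t) where
  mA : A → Option B
  mB : B → Option A
  inv : ∀ a b, mA a = some b ↔ mB b = some a
  memA : ∀ a b, mA a = some b → a ∈ E.Abar t ∧ b ∈ E.Bbar t

/-- A matching for the dynamic economy: a period matching for every realization of every
length, subject to irreversibility. -/
structure Matching (A B : Type) where
  pm : ∀ {t : ℕ} (E : Realization A B t), PeriodMatching E
  irrevA : ∀ {s t : ℕ} (h : s ≤ t) (E : Realization A B t) (a : A) (b : B),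
    (pm (E.trunc h)).mA a = some b → (pm E).mA a = some b

/-- Primitives of the market: Bernoulli utilities and discount factors in `[0,1)`.
The utility of remaining unmatched is normalized to `0` (`u(a,a)=0`, `v(b,b)=0`). -/
structure Market (A B : Type) where
  u : A → B → ℝ
  v : A → B → ℝ
  dA : A → ℝ
  dB : B → ℝ
  dA_nonneg : ∀ a, 0 ≤ dA a
  dA_lt_one : ∀ a, dA a < 1
  dB_nonneg : ∀ b, 0 ≤ dB b
  dB_lt_one : ∀ b, dB b < 1

/-- An economy of length `T`: a probability distribution on realizations of length `T`. -/
structure Economy (A B : Type) (T : ℕ) where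
  prob : Realization A B T → ℝ
  nonneg : ∀ E, 0 ≤ prob E
  finsupp : (Function.support prob).Finite
  total : ∑ᶠ E, prob E = 1

/-- Total mass of realizations following `E`. -/
noncomputable def condMass {T t : ℕ} (G : Economy A B T) (E : Realization A B t) : ℝ :=
  ∑ᶠ (F : Realization A B T) (_ : Follows F E), G.prob F

/-- Conditional probability of the length-`T` realization `F` given the truncation `E`. -/
noncomputable def cond {T t : ℕ} (G : Economy A B T) (E : Realization A B t)
    (F : Realization A B T) : ℝ :=
  if Follows F E then G.prob F / condMass G E else 0

/-- `E` is in the support of the economy `G`. -/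
def InSupport {T t : ℕ} (G : Economy A B T) (E : Realization A B t) : Prop :=
  ∃ F : Realization A B T, Follows F E ∧ 0 < G.prob F

/-- The first period `s` with `t ≤ s ≤ n` at which `a` is matched under `m` along the
realization `F`; equal to `n` if `a` stays unmatched. -/
noncomputable def matchTimeA (m : Matching A B) {n : ℕ} (F : Realization A B n) (a : A)
    (t : ℕ) : ℕ :=
  sInf ({ s : ℕ | t ≤ s ∧ ∃ h : s ≤ n, ((m.pm (F.trunc h)).mA a).isSome } ∪ {n})

noncomputable def matchTimeB (m : Matching A B) {n : ℕ} (F : Realization A B n) (b : B)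
    (t : ℕ) : ℕ :=
  sInf ({ s : ℕ | t ≤ s ∧ ∃ h : s ≤ n, ((m.pm (F.trunc h)).mB b).isSome } ∪ {n})

/-- Expected discounted payoff of side-`A` agent `a` from matching `m` at date `t`,
when the realization so far is `E`. -/
noncomputable def Upay (M : Market A B) {T : ℕ} (G : Economy A B T) (m : Matching A B)
    (a : A) {t : ℕ} (E : Realization A B t) : ℝ :=
  ∑ᶠ F : Realization A B T,
    cond G E F * (M.dA a ^ (matchTimeA m F a t - t) * ((m.pm F).mA a).elim 0 (M.u a))

/-- Expected discounted payoff of side-`B` agent `b` from matching `m` at date `t`. -/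
noncomputable def Vpay (M : Market A B) {T : ℕ} (G : Economy A B T) (m : Matching A B)
    (b : B) {t : ℕ} (E : Realization A B t) : ℝ :=
  ∑ᶠ F : Realization A B T,
    cond G E F * (M.dB b ^ (matchTimeB m F b t - t) * ((m.pm F).mB b).elim 0 (fun a => M.v a b))

/-- The set of side-`A` agents available to match at `E` (arrived and unmatched as of the
previous period). -/
noncomputable def availA (m : Matching A B) {t : ℕ} (E : Realization A B t) : Finset A :=
  (E.Abar t).filter fun a => (m.pm (E.trunc (Nat.sub_le t 1))).mA a = none

noncomputable def availB (m : Matching A B) {t : ℕ} (E : Realization A B t) : Finset B :=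
  (E.Bbar t).filter fun b => (m.pm (E.trunc (Nat.sub_le t 1))).mB b = none

/-- The agents on side `A` left unmatched at the end of the last period of `E` under `m`. -/
noncomputable def unmatchedA (m : Matching A B) {t : ℕ} (E : Realization A B t) : Finset A :=
  (E.Abar t).filter fun a => (m.pm E).mA a = none

noncomputable def unmatchedB (m : Matching A B) {t : ℕ} (E : Realization A B t) : Finset B :=
  (E.Bbar t).filter fun b => (m.pm E).mB b = none

/-- `mbar` coincides with `m` at every realization (of length `≤ T`) that does not
follow `E`: membership in `M_T(m, E^t)`. -/
def SameOff (T : ℕ) (m mbar : Matching A B) {t : ℕ} (E : Realization A B t) : Prop :=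
  ∀ (s : ℕ), s ≤ T → ∀ F : Realization A B s, ¬ Follows F E → mbar.pm F = m.pm F

/-- Static stability of a one-period matching of the pools `(Ah, Bh)` with respect to the
true utilities: individual rationality plus absence of blocking pairs. -/
def IsStaticStable (M : Market A B) (Ah : Finset A) (Bh : Finset B)
    (mA : A → Option B) (mB : B → Option A) : Prop :=
  (∀ a ∈ Ah, 0 ≤ (mA a).elim 0 (M.u a)) ∧
  (∀ b ∈ Bh, 0 ≤ (mB b).elim 0 (fun a => M.v a b)) ∧
  ¬ ∃ a ∈ Ah, ∃ b ∈ Bh,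
      (mA a).elim 0 (M.u a) < M.u a b ∧ (mB b).elim 0 (fun a' => M.v a' b) < M.v a b

/-- The period-`t` matching `m(E^t)` is stable amongst those who match in period `t`. -/
def StableAmongMatched (M : Market A B) (m : Matching A B) {t : ℕ}
    (E : Realization A B t) : Prop :=
  (∀ a ∈ availA m E, ∀ b, (m.pm E).mA a = some b → 0 ≤ M.u a b) ∧
  (∀ b ∈ availB m E, ∀ a, (m.pm E).mB b = some a → 0 ≤ M.v a b) ∧
  ¬ ∃ a ∈ availA m E, ∃ b ∈ availB m E,
      ((m.pm E).mA a).isSome ∧ ((m.pm E).mB b).isSome ∧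
      ((m.pm E).mA a).elim 0 (M.u a) < M.u a b ∧
      ((m.pm E).mB b).elim 0 (fun a' => M.v a' b) < M.v a b

/-- The continuation realization induced by a length-`n` realization `F` after period `t`,
given the matching `m`: its first-period arrivals consist of the agents left unmatched by
`m` at the end of period `t` together with the period-`t+1` arrivals of `F`; afterwards it
coincides with `F`. -/
noncomputable def contReal (m : Matching A B) {n : ℕ} (F : Realization A B n) (t : ℕ) :
    Realization A B (n - t) where
  arrA i :=
    if (i : ℕ) = 0 then
      unmatchedA m (F.trunc (show t ≤ n by have := i.isLt; omega)) ∪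
        F.arrA ⟨t, by have := i.isLt; omega⟩
    else F.arrA ⟨t + (i : ℕ), by have := i.isLt; omega⟩
  arrB i :=
    if (i : ℕ) = 0 then
      unmatchedB m (F.trunc (show t ≤ n by have := i.isLt; omega)) ∪
        F.arrB ⟨t, by have := i.isLt; omega⟩
    else F.arrB ⟨t + (i : ℕ), by have := i.isLt; omega⟩
  disjA := by
    intro i j hij
    have hi := i.isLt; have hj := j.isLt
    have hne : (i : ℕ) ≠ (j : ℕ) := fun hc => hij (Fin.ext hc)
    have key : ∀ (S : Finset A) (k : ℕ) (hk : k < n), (∀ a ∈ S, ∃ l : ℕ, l ≤ t ∧ ∃ hl : l < n,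
        a ∈ F.arrA ⟨l, hl⟩) → t < k → Disjoint S (F.arrA ⟨k, hk⟩) := by
      intro S k hk hS htk
      refine Finset.disjoint_left.mpr ?_
      intro a haS hak
      obtain ⟨l, hlt, hl, hal⟩ := hS a haS
      have hne' : (⟨l, hl⟩ : Fin n) ≠ ⟨k, hk⟩ := by
        intro hc
        have : l = k := congrArg Fin.val hc
        omega
      exact Finset.disjoint_left.mp (F.disjA _ _ hne') hal hak
    have hsub : ∀ (ht : t ≤ n) a, a ∈ unmatchedA m (F.trunc ht) ∪ F.arrA ⟨t, by
        have : (0:ℕ) < n - t ∨ True := Or.inr trivial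
        exact lt_of_lt_of_le (Nat.lt_succ_self t) (by omega)⟩ → True := fun _ _ _ => trivial
    try dsimp only
    split_ifs with h0i h0j h0j
    · omega
    · -- i = 0, j ≠ 0
      apply Finset.disjoint_union_left.mpr
      constructor
      · refine key _ _ _ ?_ (by omega)
        intro a ha
        have ha' := Finset.mem_filter.mp ha
        obtain ⟨k, hk, hak⟩ := (Realization.mem_Abar _ _ _).mp ha'.1
        refine ⟨(k : ℕ), by omega, by omega, ?_⟩
        simpa [Realization.trunc, Fin.castLE] using hak
      · refine key _ _ _ ?_ (by omega)
        intro a ha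
        exact ⟨t, le_refl t, by omega, ha⟩
    · -- j = 0, i ≠ 0
      apply Disjoint.symm
      apply Finset.disjoint_union_left.mpr
      constructor
      · refine key _ _ _ ?_ (by omega)
        intro a ha
        have ha' := Finset.mem_filter.mp ha
        obtain ⟨k, hk, hak⟩ := (Realization.mem_Abar _ _ _).mp ha'.1
        refine ⟨(k : ℕ), by omega, by omega, ?_⟩
        simpa [Realization.trunc, Fin.castLE] using hak
      · refine key _ _ _ ?_ (by omega)
        intro a ha
        exact ⟨t, le_refl t, by omega, ha⟩
    · exact F.disjA ⟨t + i, by omega⟩ ⟨t + j, by omega⟩ (by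
        intro hc
        have : t + (i : ℕ) = t + (j : ℕ) := congrArg Fin.val hc
        omega)
  disjB := by
    intro i j hij
    have hi := i.isLt; have hj := j.isLt
    have hne : (i : ℕ) ≠ (j : ℕ) := fun hc => hij (Fin.ext hc)
    have key : ∀ (S : Finset B) (k : ℕ) (hk : k < n), (∀ b ∈ S, ∃ l : ℕ, l ≤ t ∧ ∃ hl : l < n,
        b ∈ F.arrB ⟨l, hl⟩) → t < k → Disjoint S (F.arrB ⟨k, hk⟩) := by
      intro S k hk hS htk
      refine Finset.disjoint_left.mpr ?_
      intro b hbS hbk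
      obtain ⟨l, hlt, hl, hbl⟩ := hS b hbS
      have hne' : (⟨l, hl⟩ : Fin n) ≠ ⟨k, hk⟩ := by
        intro hc
        have : l = k := congrArg Fin.val hc
        omega
      exact Finset.disjoint_left.mp (F.disjB _ _ hne') hbl hbk
    try dsimp only
    split_ifs with h0i h0j h0j
    · omega
    · apply Finset.disjoint_union_left.mpr
      constructor
      · refine key _ _ _ ?_ (by omega)
        intro b hb
        have hb' := Finset.mem_filter.mp hb
        obtain ⟨k, hk, hbk⟩ := (Realization.mem_Bbar _ _ _).mp hb'.1
        refine ⟨(k : ℕ), by omega, by omega, ?_⟩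
        simpa [Realization.trunc, Fin.castLE] using hbk
      · refine key _ _ _ ?_ (by omega)
        intro b hb
        exact ⟨t, le_refl t, by omega, hb⟩
    · apply Disjoint.symm
      apply Finset.disjoint_union_left.mpr
      constructor
      · refine key _ _ _ ?_ (by omega)
        intro b hb
        have hb' := Finset.mem_filter.mp hb
        obtain ⟨k, hk, hbk⟩ := (Realization.mem_Bbar _ _ _).mp hb'.1
        refine ⟨(k : ℕ), by omega, by omega, ?_⟩
        simpa [Realization.trunc, Fin.castLE] using hbk
      · refine key _ _ _ ?_ (by omega)
        intro b hb
        exact ⟨t, le_refl t, by omega, hb⟩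
    · exact F.disjB ⟨t + i, by omega⟩ ⟨t + j, by omega⟩ (by
        intro hc
        have : t + (i : ℕ) = t + (j : ℕ) := congrArg Fin.val hc
        omega)

/-- The pushforward of the conditional distribution `G(·|E)` under the map sending a
length-`T` realization `F` following `E` to the induced continuation realization. -/
noncomputable def contPush {T : ℕ} (G : Economy A B T) (m : Matching A B) {t : ℕ}
    (E : Realization A B t) : Realization A B (T - t) → ℝ := fun F' =>
  ∑ᶠ (F : Realization A B T) (_ : Follows F E ∧ contReal m F t = F'), cond G E F

/-- The empty realization. -/
def emptyRealization (A B : Type) (n : ℕ) : Realization A B n :=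
  ⟨fun _ => ∅, fun _ => ∅, fun _ _ _ => Finset.disjoint_empty_left ∅,
    fun _ _ _ => Finset.disjoint_empty_left ∅⟩

/-- The point mass at the empty realization. -/
noncomputable def pointEconomy (A B : Type) (n : ℕ) : Economy A B n where
  prob F := if F = emptyRealization A B n then 1 else 0
  nonneg := by intro E; (try dsimp only); split <;> norm_num
  finsupp := by
    apply Set.Finite.subset (Set.finite_singleton (emptyRealization A B n))
    intro x hx
    by_contra hne
    simp only [Set.mem_singleton_iff] at hne
    simp [Function.mem_support, hne] at hx
  total := by
    rw [finsum_eq_single _ (emptyRealization A B n) (fun x hx => if_neg hx)]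
    simp

/-- The continuation economy of length `T - t` induced by the matching `m` and the
realization `E`: arrivals in its first period are the agents left unmatched by `m` at
the end of period `t` together with the period-`t+1` arrivals, and subsequent arrivals
are as in the original economy, with probabilities given by `G(·|E)`. -/
noncomputable def contEconomy {T : ℕ} (G : Economy A B T) (m : Matching A B) {t : ℕ}
    (E : Realization A B t) : Economy A B (T - t) :=
  if h : ∃ Ec : Economy A B (T - t), Ec.prob = contPush G m E then h.choose
  else pointEconomy A B (T - t)

/-- The continuation of `mbar` after `(t, E)`, restricted to the agents not yet matched
at the end of period `t`, coincides with the matching `m'` of the continuation economy. -/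
def ContAgrees (T : ℕ) (mbar m' : Matching A B) {t : ℕ} (E : Realization A B t) : Prop :=
  ∀ (s : ℕ), 1 ≤ s → t + s ≤ T → ∀ F : Realization A B (t + s), Follows F E →
    (∀ a : A, (mbar.pm E).mA a = none →
      (m'.pm (contReal mbar F t)).mA a = (mbar.pm F).mA a) ∧
    (∀ b : B, (mbar.pm E).mB b = none →
      (m'.pm (contReal mbar F t)).mB b = (mbar.pm F).mB b)

/-- The conjecture set for a side-`A` agent `a` available at `(t, E)`, given a candidate
solution correspondence `D` for continuation economies of length `T - t`. -/
def ConjA (M : Market A B) {T : ℕ} (G : Economy A B T) {t : ℕ} (E : Realization A B t)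
    (m : Matching A B) (a : A) (D : Economy A B (T - t) → Set (Matching A B)) :
    Set (Matching A B) :=
  { mbar | SameOff T m mbar E ∧ (mbar.pm E).mA a = none ∧ StableAmongMatched M mbar E ∧
      ∃ m' ∈ D (contEconomy G mbar E), ContAgrees T mbar m' E }

/-- The conjecture set for a side-`B` agent `b` available at `(t, E)`. -/
def ConjB (M : Market A B) {T : ℕ} (G : Economy A B T) {t : ℕ} (E : Realization A B t)
    (m : Matching A B) (b : B) (D : Economy A B (T - t) → Set (Matching A B)) :
    Set (Matching A B) :=
  { mbar | SameOff T m mbar E ∧ (mbar.pm E).mB b = none ∧ StableAmongMatched M mbar E ∧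
      ∃ m' ∈ D (contEconomy G mbar E), ContAgrees T mbar m' E }

/-- Dynamic stability, defined by recursion on the horizon `T`:
(DS2)/(DS3) no available agent benefits from being unavailable to match, relative to some
conjecture whose continuation is dynamically stable for the continuation economy; and
(DS1) no pair of contemporaneously available agents form a blocking pair. -/
noncomputable def DynStable (M : Market A B) (T : ℕ) : Economy A B T → Set (Matching A B) :=
  fun G =>
  { m | ∀ t : ℕ, 1 ≤ t → t ≤ T → ∀ E : Realization A B t, InSupport G E →
      (∀ a ∈ availA m E, ∃ mbar ∈ ConjA M G E m a (DynStable M (T - t)),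
          Upay M G mbar a E ≤ Upay M G m a E) ∧
      (∀ b ∈ availB m E, ∃ mbar ∈ ConjB M G E m b (DynStable M (T - t)),
          Vpay M G mbar b E ≤ Vpay M G m b E) ∧
      ¬ ∃ a ∈ availA m E, ∃ b ∈ availB m E,
          Upay M G m a E < M.u a b ∧ Vpay M G m b E < M.v a b }
termination_by T
decreasing_by all_goals omega

/-- The conjecture set `M_D(a, m, E^t)` for a side-`A` agent. -/
noncomputable def MD_A (M : Market A B) {T : ℕ} (G : Economy A B T) {t : ℕ}
    (E : Realization A B t) (m : Matching A B) (a : A) : Set (Matching A B) :=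
  ConjA M G E m a (DynStable M (T - t))

/-- The conjecture set `M_D(b, m, E^t)` for a side-`B` agent. -/
noncomputable def MD_B (M : Market A B) {T : ℕ} (G : Economy A B T) {t : ℕ}
    (E : Realization A B t) (m : Matching A B) (b : B) : Set (Matching A B) :=
  ConjB M G E m b (DynStable M (T - t))

end DynMatch

namespace DynMatch

open scoped Classical


variable {A B : Type}

open scoped Classical
variable {A B : Type}

theorem trunc_self {t : ℕ} (E : Realization A B t) (h : t ≤ t) : E.trunc h = E := by
  apply Realization.ext' <;> funext i <;> exact congrArg _ (Fin.ext rfl)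

theorem pmA_zero {E0 : Realization A B 0} (p : PeriodMatching E0) (a : A) : p.mA a = none := by
  cases h : p.mA a with
  | none => rfl
  | some b =>
    have := (p.memA a b h).1
    rw [Realization.mem_Abar] at this
    obtain ⟨i, -, -⟩ := this
    exact i.elim0

theorem pmB_zero {E0 : Realization A B 0} (p : PeriodMatching E0) (b : B) : p.mB b = none := by
  cases h : p.mB b with
  | none => rfl
  | some a => rw [← p.inv a b, pmA_zero] at h; cases h

theorem Abar_one (F : Realization A B 1) : F.Abar 1 = F.arrA ⟨0, one_pos⟩ := by
  ext a
  rw [Realization.mem_Abar]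
  constructor
  · rintro ⟨i, -, hi⟩
    have : i = ⟨0, one_pos⟩ := Subsingleton.elim _ _
    rwa [this] at hi
  · intro h; exact ⟨⟨0, one_pos⟩, by omega, h⟩

theorem Bbar_one (F : Realization A B 1) : F.Bbar 1 = F.arrB ⟨0, one_pos⟩ := by
  ext b
  rw [Realization.mem_Bbar]
  constructor
  · rintro ⟨i, -, hi⟩
    have : i = ⟨0, one_pos⟩ := Subsingleton.elim _ _
    rwa [this] at hi
  · intro h; exact ⟨⟨0, one_pos⟩, by omega, h⟩

theorem Abar_two (F : Realization A B 2) :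
    F.Abar 2 = F.arrA ⟨0, Nat.zero_lt_two⟩ ∪ F.arrA ⟨1, Nat.one_lt_two⟩ := by
  ext a
  rw [Realization.mem_Abar, Finset.mem_union]
  constructor
  · rintro ⟨⟨iv, hlt⟩, -, hi⟩
    match iv, hlt with
    | 0, _ => exact Or.inl hi
    | 1, _ => exact Or.inr hi
  · rintro (h | h)
    · exact ⟨⟨0, by omega⟩, by omega, h⟩
    · exact ⟨⟨1, by omega⟩, by omega, h⟩

theorem Bbar_two (F : Realization A B 2) :
    F.Bbar 2 = F.arrB ⟨0, Nat.zero_lt_two⟩ ∪ F.arrB ⟨1, Nat.one_lt_two⟩ := by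
  ext b
  rw [Realization.mem_Bbar, Finset.mem_union]
  constructor
  · rintro ⟨⟨iv, hlt⟩, -, hi⟩
    match iv, hlt with
    | 0, _ => exact Or.inl hi
    | 1, _ => exact Or.inr hi
  · rintro (h | h)
    · exact ⟨⟨0, by omega⟩, by omega, h⟩
    · exact ⟨⟨1, by omega⟩, by omega, h⟩

theorem mem_Abar_trunc {n s : ℕ} (F : Realization A B n) (h : s ≤ n) {a : A}
    (ha : a ∈ (F.trunc h).Abar s) : a ∈ F.Abar n := by
  rw [Realization.mem_Abar] at ha ⊢
  obtain ⟨i, -, hi⟩ := ha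
  exact ⟨Fin.castLE h i, (Fin.castLE h i).isLt, hi⟩

theorem mem_Bbar_trunc {n s : ℕ} (F : Realization A B n) (h : s ≤ n) {b : B}
    (hb : b ∈ (F.trunc h).Bbar s) : b ∈ F.Bbar n := by
  rw [Realization.mem_Bbar] at hb ⊢
  obtain ⟨i, -, hi⟩ := hb
  exact ⟨Fin.castLE h i, (Fin.castLE h i).isLt, hi⟩

theorem follows_self {t : ℕ} (F : Realization A B t) : Follows F F :=
  ⟨le_rfl, trunc_self F le_rfl⟩

/-- matchTime lemmas -/
theorem matchTimeA_last {n : ℕ} (m : Matching A B) (F : Realization A B n) (a : A) :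
    matchTimeA m F a n = n := by
  unfold matchTimeA
  have : ({ s : ℕ | n ≤ s ∧ ∃ h : s ≤ n, ((m.pm (F.trunc h)).mA a).isSome } ∪ {n}) = {n} := by
    ext s
    constructor
    · rintro (⟨h1, h2, -⟩ | h)
      · simp only [Set.mem_singleton_iff]; omega
      · exact h
    · intro h; exact Or.inr h
  rw [this]
  exact csInf_singleton n

theorem matchTimeB_last {n : ℕ} (m : Matching A B) (F : Realization A B n) (b : B) :
    matchTimeB m F b n = n := by
  unfold matchTimeB
  have : ({ s : ℕ | n ≤ s ∧ ∃ h : s ≤ n, ((m.pm (F.trunc h)).mB b).isSome } ∪ {n}) = {n} := by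
    ext s
    constructor
    · rintro (⟨h1, h2, -⟩ | h)
      · simp only [Set.mem_singleton_iff]; omega
      · exact h
    · intro h; exact Or.inr h
  rw [this]
  exact csInf_singleton n

theorem matchTimeA_one_some (m : Matching A B) (F : Realization A B 2) (a : A)
    (h : ((m.pm (F.trunc one_le_two)).mA a).isSome) : matchTimeA m F a 1 = 1 := by
  unfold matchTimeA
  refine le_antisymm (Nat.sInf_le (Or.inl ⟨le_rfl, one_le_two, h⟩)) ?_
  refine le_csInf ⟨1, Or.inl ⟨le_rfl, one_le_two, h⟩⟩ ?_
  rintro x (⟨h1, -⟩ | h1)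
  · exact h1
  · simp only [Set.mem_singleton_iff] at h1; omega

theorem matchTimeB_one_some (m : Matching A B) (F : Realization A B 2) (b : B)
    (h : ((m.pm (F.trunc one_le_two)).mB b).isSome) : matchTimeB m F b 1 = 1 := by
  unfold matchTimeB
  refine le_antisymm (Nat.sInf_le (Or.inl ⟨le_rfl, one_le_two, h⟩)) ?_
  refine le_csInf ⟨1, Or.inl ⟨le_rfl, one_le_two, h⟩⟩ ?_
  rintro x (⟨h1, -⟩ | h1)
  · exact h1
  · simp only [Set.mem_singleton_iff] at h1; omega

theorem matchTimeA_one_none (m : Matching A B) (F : Realization A B 2) (a : A)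
    (h : (m.pm (F.trunc one_le_two)).mA a = none) : matchTimeA m F a 1 = 2 := by
  unfold matchTimeA
  have : ({ s : ℕ | 1 ≤ s ∧ ∃ hs : s ≤ 2, ((m.pm (F.trunc hs)).mA a).isSome } ∪ {2}) = {2} := by
    ext s
    constructor
    · rintro (⟨h1, hs, h2⟩ | h1)
      · simp only [Set.mem_singleton_iff]
        rcases Nat.lt_or_ge s 2 with hlt | hge
        · exfalso
          have hs1 : s = 1 := by omega
          subst hs1
          rw [h] at h2
          simp at h2
        · omega
      · exact h1
    · intro h1; exact Or.inr h1
  rw [this]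
  exact csInf_singleton 2

theorem matchTimeB_one_none (m : Matching A B) (F : Realization A B 2) (b : B)
    (h : (m.pm (F.trunc one_le_two)).mB b = none) : matchTimeB m F b 1 = 2 := by
  unfold matchTimeB
  have : ({ s : ℕ | 1 ≤ s ∧ ∃ hs : s ≤ 2, ((m.pm (F.trunc hs)).mB b).isSome } ∪ {2}) = {2} := by
    ext s
    constructor
    · rintro (⟨h1, hs, h2⟩ | h1)
      · simp only [Set.mem_singleton_iff]
        rcases Nat.lt_or_ge s 2 with hlt | hge
        · exfalso
          have hs1 : s = 1 := by omega
          subst hs1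
          rw [h] at h2
          simp at h2
        · omega
      · exact h1
    · intro h1; exact Or.inr h1
  rw [this]
  exact csInf_singleton 2

theorem abar_two_mem (F : Realization A B 2) (x : A) :
    x ∈ F.Abar 2 ↔ x ∈ F.arrA ⟨0, Nat.zero_lt_two⟩ ∨ x ∈ F.arrA ⟨1, Nat.one_lt_two⟩ := by
  rw [Abar_two, Finset.mem_union]

theorem bbar_two_mem (F : Realization A B 2) (x : B) :
    x ∈ F.Bbar 2 ↔ x ∈ F.arrB ⟨0, Nat.zero_lt_two⟩ ∨ x ∈ F.arrB ⟨1, Nat.one_lt_two⟩ := by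
  rw [Bbar_two, Finset.mem_union]

theorem mem_availA_iff {t : ℕ} (m : Matching A B) (E : Realization A B t) (a : A) :
    a ∈ availA m E ↔ a ∈ E.Abar t ∧ (m.pm (E.trunc (Nat.sub_le t 1))).mA a = none := by
  unfold availA
  exact Finset.mem_filter

theorem mem_availB_iff {t : ℕ} (m : Matching A B) (E : Realization A B t) (b : B) :
    b ∈ availB m E ↔ b ∈ E.Bbar t ∧ (m.pm (E.trunc (Nat.sub_le t 1))).mB b = none := by
  unfold availB
  exact Finset.mem_filter

theorem prob_dirac {T : ℕ} (G : Economy A B T) (E : Realization A B T)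
    (hG : ∀ F, 0 < G.prob F ↔ F = E) : G.prob = fun F => if F = E then 1 else 0 := by
  have hzero : ∀ F, F ≠ E → G.prob F = 0 := fun F hF =>
    le_antisymm (not_lt.1 fun hc => hF ((hG F).1 hc)) (G.nonneg F)
  have hE : G.prob E = 1 := by
    have := G.total
    rwa [finsum_eq_single _ E hzero] at this
  funext F
  by_cases h : F = E
  · subst h; simp [hE]
  · simp [h, hzero F h]

theorem condMass_dirac {T t : ℕ} (G : Economy A B T) (E : Realization A B T)
    (hP : G.prob = fun F => if F = E then 1 else 0) (E' : Realization A B t)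
    (hf : Follows E E') : condMass G E' = 1 := by
  unfold condMass
  rw [finsum_eq_single _ E]
  · rw [finsum_eq_if, if_pos hf, hP]; simp
  · intro F hF
    rw [finsum_eq_if, hP]
    simp [hF]

theorem cond_dirac {T t : ℕ} (G : Economy A B T) (E : Realization A B T)
    (hP : G.prob = fun F => if F = E then 1 else 0) (E' : Realization A B t)
    (hf : Follows E E') : cond G E' = fun F => if F = E then 1 else 0 := by
  funext F
  unfold cond
  rw [condMass_dirac G E hP E' hf, hP]
  by_cases h : F = E
  · subst h; simp [hf]
  · simp [h]

theorem Upay_dirac (M : Market A B) {T t : ℕ} (G : Economy A B T) (E : Realization A B T)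
    (hP : G.prob = fun F => if F = E then 1 else 0) (E' : Realization A B t)
    (hf : Follows E E') (m : Matching A B) (a : A) :
    Upay M G m a E' =
      M.dA a ^ (matchTimeA m E a t - t) * ((m.pm E).mA a).elim 0 (M.u a) := by
  unfold Upay
  have hc := cond_dirac G E hP E' hf
  rw [finsum_eq_single _ E]
  · rw [hc]; simp
  · intro F hF
    rw [hc]
    simp [hF]

theorem Vpay_dirac (M : Market A B) {T t : ℕ} (G : Economy A B T) (E : Realization A B T)
    (hP : G.prob = fun F => if F = E then 1 else 0) (E' : Realization A B t)
    (hf : Follows E E') (m : Matching A B) (b : B) :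
    Vpay M G m b E' =
      M.dB b ^ (matchTimeB m E b t - t) * ((m.pm E).mB b).elim 0 (fun a => M.v a b) := by
  unfold Vpay
  have hc := cond_dirac G E hP E' hf
  rw [finsum_eq_single _ E]
  · rw [hc]; simp
  · intro F hF
    rw [hc]
    simp [hF]

/-- dirac economy -/
noncomputable def diracEconomy {n : ℕ} (E0 : Realization A B n) : Economy A B n where
  prob F := if F = E0 then 1 else 0
  nonneg := by intro F; split <;> norm_num
  finsupp := by
    apply Set.Finite.subset (Set.finite_singleton E0)
    intro x hx
    by_contra hne
    simp only [Set.mem_singleton_iff] at hne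
    simp [Function.mem_support, hne] at hx
  total := by
    rw [finsum_eq_single _ E0 (fun x hx => if_neg hx)]
    simp

noncomputable def filteredOpt {α β : Type} (g : α → Option β) (X : Finset α) (Y : Finset β) :
    α → Option β :=
  fun a => (g a).bind fun b => if a ∈ X ∧ b ∈ Y then some b else none

theorem filteredOpt_eq_some {α β : Type} {g : α → Option β} {X : Finset α} {Y : Finset β}
    {a : α} {b : β} :
    filteredOpt g X Y a = some b ↔ g a = some b ∧ a ∈ X ∧ b ∈ Y := by
  constructor
  · intro hfo
    obtain ⟨b', hb', hif⟩ := Option.bind_eq_some_iff.1 hfo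
    by_cases hc : a ∈ X ∧ b' ∈ Y
    · rw [if_pos hc] at hif; cases hif; exact ⟨hb', hc.1, hc.2⟩
    · rw [if_neg hc] at hif; cases hif
  · rintro ⟨hb, hX, hY⟩
    unfold filteredOpt
    rw [hb]
    simp [hX, hY]

theorem filteredOpt_none {α β : Type} {g : α → Option β} {X : Finset α} {Y : Finset β}
    {a : α} (h : g a = none) : filteredOpt g X Y a = none := by
  simp [filteredOpt, h]

noncomputable def filteredPM (gA : A → Option B) (gB : B → Option A)
    (hg : ∀ a b, gA a = some b ↔ gB b = some a) {n : ℕ} (F : Realization A B n) :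
    PeriodMatching F where
  mA := filteredOpt gA (F.Abar n) (F.Bbar n)
  mB := filteredOpt gB (F.Bbar n) (F.Abar n)
  inv a b := by rw [filteredOpt_eq_some, filteredOpt_eq_some, hg]; tauto
  memA a b h := (filteredOpt_eq_some.1 h).2

theorem filteredPM_mA (gA : A → Option B) (gB : B → Option A)
    (hg : ∀ a b, gA a = some b ↔ gB b = some a) {n : ℕ} (F : Realization A B n) :
    (filteredPM gA gB hg F).mA = filteredOpt gA (F.Abar n) (F.Bbar n) := rfl

theorem filteredPM_mB (gA : A → Option B) (gB : B → Option A)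
    (hg : ∀ a b, gA a = some b ↔ gB b = some a) {n : ℕ} (F : Realization A B n) :
    (filteredPM gA gB hg F).mB = filteredOpt gB (F.Bbar n) (F.Abar n) := rfl

noncomputable def gMatching (gA : A → Option B) (gB : B → Option A)
    (hg : ∀ a b, gA a = some b ↔ gB b = some a) : Matching A B where
  pm F := filteredPM gA gB hg F
  irrevA h F a b hab := by
    rw [filteredPM_mA, filteredOpt_eq_some] at hab
    rw [filteredPM_mA, filteredOpt_eq_some]
    exact ⟨hab.1, mem_Abar_trunc F h hab.2.1, mem_Bbar_trunc F h hab.2.2⟩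

/-- conjecture matching: off followers of `E1` agree with `m`; at followers of `E1`,
match according to `g1` in period 1 and according to `g` subsequently. -/
noncomputable def mix (m : Matching A B) (E1 : Realization A B 1)
    (g1A : A → Option B) (g1B : B → Option A)
    (hg1 : ∀ a b, g1A a = some b ↔ g1B b = some a)
    (gA : A → Option B) (gB : B → Option A)
    (hg : ∀ a b, gA a = some b ↔ gB b = some a)
    (hcomp : ∀ a b, g1A a = some b → gA a = some b) : Matching A B where
  pm {n} F :=
    if _ : Follows F E1 then
      if _ : 2 ≤ n then filteredPM gA gB hg F else filteredPM g1A g1B hg1 F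
    else m.pm F
  irrevA := by
    intro s n hsn F a b hab
    by_cases hs0 : s = 0
    · subst hs0
      exact absurd hab (by simp [pmA_zero])
    · have hs1 : 1 ≤ s := by omega
      by_cases hF : Follows F E1
      · have hF' : Follows (F.trunc hsn) E1 := by
          obtain ⟨h1, heq⟩ := hF
          exact ⟨hs1, (Realization.trunc_trunc F hsn hs1).trans heq⟩
        rw [dif_pos hF'] at hab
        rw [dif_pos hF]
        by_cases h2s : 2 ≤ s
        · rw [dif_pos h2s] at hab
          rw [dif_pos (h2s.trans hsn)]
          rw [filteredPM_mA, filteredOpt_eq_some] at hab ⊢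
          exact ⟨hab.1, mem_Abar_trunc F hsn hab.2.1, mem_Bbar_trunc F hsn hab.2.2⟩
        · rw [dif_neg h2s] at hab
          rw [filteredPM_mA, filteredOpt_eq_some] at hab
          by_cases h2n : 2 ≤ n
          · rw [dif_pos h2n, filteredPM_mA, filteredOpt_eq_some]
            exact ⟨hcomp a b hab.1, mem_Abar_trunc F hsn hab.2.1,
              mem_Bbar_trunc F hsn hab.2.2⟩
          · rw [dif_neg h2n, filteredPM_mA, filteredOpt_eq_some]
            exact ⟨hab.1, mem_Abar_trunc F hsn hab.2.1, mem_Bbar_trunc F hsn hab.2.2⟩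
      · have hF' : ¬ Follows (F.trunc hsn) E1 := by
          rintro ⟨h1, heq⟩
          exact hF ⟨h1.trans hsn, (Realization.trunc_trunc F hsn h1).symm.trans heq⟩
        rw [dif_neg hF'] at hab
        rw [dif_neg hF]
        exact m.irrevA hsn F a b hab

section mixlemmas
variable (m : Matching A B) (E1 : Realization A B 1)
    (g1A : A → Option B) (g1B : B → Option A)
    (hg1 : ∀ a b, g1A a = some b ↔ g1B b = some a)
    (gA : A → Option B) (gB : B → Option A)
    (hg : ∀ a b, gA a = some b ↔ gB b = some a)
    (hcomp : ∀ a b, g1A a = some b → gA a = some b)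

theorem mix_pm_one (F : Realization A B 1) (hF : Follows F E1) :
    (mix m E1 g1A g1B hg1 gA gB hg hcomp).pm F = filteredPM g1A g1B hg1 F := by
  show dite _ _ _ = _
  rw [dif_pos hF, dif_neg (by omega : ¬ (2:ℕ) ≤ 1)]

theorem mix_pm_two (F : Realization A B 2) (hF : Follows F E1) :
    (mix m E1 g1A g1B hg1 gA gB hg hcomp).pm F = filteredPM gA gB hg F := by
  show dite _ _ _ = _
  rw [dif_pos hF, dif_pos (le_refl 2)]

theorem mix_pm_off {n : ℕ} (F : Realization A B n) (hF : ¬ Follows F E1) :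
    (mix m E1 g1A g1B hg1 gA gB hg hcomp).pm F = m.pm F := by
  show dite _ _ _ = _
  rw [dif_neg hF]

theorem mix_sameOff : SameOff 2 m (mix m E1 g1A g1B hg1 gA gB hg hcomp) E1 :=
  fun _ _ F hF => mix_pm_off m E1 g1A g1B hg1 gA gB hg hcomp F hF

theorem mix_sameOff' : SameOff 1 m (mix m E1 g1A g1B hg1 gA gB hg hcomp) E1 :=
  fun _ _ F hF => mix_pm_off m E1 g1A g1B hg1 gA gB hg hcomp F hF

end mixlemmas

/-- conjecture matching at the last date: keep only the period-1 matches of `m` at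
followers of `E`. -/
noncomputable def keepFirst (m : Matching A B) (E : Realization A B 2) : Matching A B where
  pm {n} F :=
    if h : Follows F E then
      { mA := (m.pm (E.trunc one_le_two)).mA
        mB := (m.pm (E.trunc one_le_two)).mB
        inv := (m.pm (E.trunc one_le_two)).inv
        memA := by
          intro a b hab
          obtain ⟨h2, heq⟩ := h
          have h1n : (1:ℕ) ≤ n := by omega
          have hmem := (m.pm (E.trunc one_le_two)).memA a b hab
          have htr : F.trunc h1n = E.trunc one_le_two := by
            rw [← heq, Realization.trunc_trunc]
          constructor
          · exact mem_Abar_trunc F h1n (by rw [htr]; exact hmem.1)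
          · exact mem_Bbar_trunc F h1n (by rw [htr]; exact hmem.2) }
    else m.pm F
  irrevA := by
    intro s n hsn F a b hab
    by_cases hs0 : s = 0
    · subst hs0
      exact absurd hab (by simp [pmA_zero])
    · by_cases hF : Follows F E
      · rw [dif_pos hF]
        by_cases h2s : 2 ≤ s
        · have hF' : Follows (F.trunc hsn) E := by
            obtain ⟨h2, heq⟩ := hF
            exact ⟨h2s, (Realization.trunc_trunc F hsn h2s).trans heq⟩
          rw [dif_pos hF'] at hab
          exact hab
        · have hF' : ¬ Follows (F.trunc hsn) E := by
            rintro ⟨h2, -⟩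
            omega
          rw [dif_neg hF'] at hab
          have hs1 : s = 1 := by omega
          subst hs1
          obtain ⟨h2, heq⟩ := hF
          have htr : F.trunc hsn = E.trunc one_le_two := by
            rw [← heq, Realization.trunc_trunc]
          rw [htr] at hab
          exact hab
      · have hF' : ¬ Follows (F.trunc hsn) E := by
          rintro ⟨h2, heq⟩
          exact hF ⟨h2.trans hsn, (Realization.trunc_trunc F hsn h2).symm.trans heq⟩
        rw [dif_neg hF', dif_neg hF] at *
        exact m.irrevA hsn F a b hab

theorem keepFirst_pm_E_mA (m : Matching A B) (E : Realization A B 2) :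
    ((keepFirst m E).pm E).mA = (m.pm (E.trunc one_le_two)).mA := by
  show (dite (Follows E E) _ _ : PeriodMatching E).mA = _
  rw [dif_pos (follows_self E)]

theorem keepFirst_pm_E_mB (m : Matching A B) (E : Realization A B 2) :
    ((keepFirst m E).pm E).mB = (m.pm (E.trunc one_le_two)).mB := by
  show (dite (Follows E E) _ _ : PeriodMatching E).mB = _
  rw [dif_pos (follows_self E)]

theorem keepFirst_pm_off (m : Matching A B) (E : Realization A B 2) {n : ℕ}
    (F : Realization A B n) (hF : ¬ Follows F E) : (keepFirst m E).pm F = m.pm F := by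
  show dite _ _ _ = _
  rw [dif_neg hF]

theorem keepFirst_sameOff (m : Matching A B) (E : Realization A B 2) :
    SameOff 2 m (keepFirst m E) E :=
  fun _ _ F hF => keepFirst_pm_off m E F hF

theorem contPush_dirac {T t : ℕ} (G : Economy A B T) (E : Realization A B T)
    (hP : G.prob = fun F => if F = E then 1 else 0) (m : Matching A B)
    (E' : Realization A B t) (hf : Follows E E') :
    contPush G m E' = fun F' => if F' = contReal m E t then 1 else 0 := by
  funext F'
  unfold contPush
  have hc := cond_dirac G E hP E' hf
  rw [finsum_eq_single _ E]
  · rw [finsum_eq_if, hc]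
    by_cases hC : contReal m E t = F'
    · rw [if_pos ⟨hf, hC⟩, if_pos hC.symm]
      simp
    · rw [if_neg (fun hcon => hC hcon.2), if_neg (fun hcon => hC hcon.symm)]
  · intro F hF
    rw [finsum_eq_if, hc]
    simp [hF]

theorem contEconomy_prob {T t : ℕ} (G : Economy A B T) (E : Realization A B T)
    (hP : G.prob = fun F => if F = E then 1 else 0) (m : Matching A B)
    (E' : Realization A B t) (hf : Follows E E') :
    (contEconomy G m E').prob = fun F' => if F' = contReal m E t then 1 else 0 := by
  have hpush := contPush_dirac G E hP m E' hf
  have hex : ∃ Ec : Economy A B (T - t), Ec.prob = contPush G m E' :=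
    ⟨diracEconomy (contReal m E t), by rw [hpush]; rfl⟩
  unfold contEconomy
  rw [dif_pos hex, hex.choose_spec, hpush]

theorem DynStable_zero (M : Market A B) (G0 : Economy A B 0) (mm : Matching A B) :
    mm ∈ DynStable M 0 G0 := by
  rw [DynStable]
  intro t h1 h2 E hs
  exact absurd (h1.trans h2) (by norm_num)

/-- trivial inverse for the empty assignment -/
theorem hgN : ∀ (a : A) (b : B), (fun _ : A => (none : Option B)) a = some b ↔
    (fun _ : B => (none : Option A)) b = some a := by simp

/-- one-period dirac economies: a statically stable matching is dynamically stable -/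
theorem onePeriodStable (M : Market A B) (H : Economy A B 1) (E0 : Realization A B 1)
    (hP : H.prob = fun F => if F = E0 then 1 else 0) (m' : Matching A B)
    (hIRA : ∀ a, 0 ≤ ((m'.pm E0).mA a).elim 0 (M.u a))
    (hIRB : ∀ b, 0 ≤ ((m'.pm E0).mB b).elim 0 (fun a => M.v a b))
    (hNB : ¬ ∃ a ∈ E0.Abar 1, ∃ b ∈ E0.Bbar 1,
        ((m'.pm E0).mA a).elim 0 (M.u a) < M.u a b ∧
        ((m'.pm E0).mB b).elim 0 (fun a' => M.v a' b) < M.v a b) :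
    m' ∈ DynStable M 1 H := by
  have hUp : ∀ (mm : Matching A B) (a : A),
      Upay M H mm a E0 = ((mm.pm E0).mA a).elim 0 (M.u a) := by
    intro mm a
    rw [Upay_dirac M H E0 hP E0 (follows_self E0) mm a, matchTimeA_last]
    simp
  have hVp : ∀ (mm : Matching A B) (b : B),
      Vpay M H mm b E0 = ((mm.pm E0).mB b).elim 0 (fun a => M.v a b) := by
    intro mm b
    rw [Vpay_dirac M H E0 hP E0 (follows_self E0) mm b, matchTimeB_last]
    simp
  rw [DynStable]
  intro t h1 h2 E' hsupp
  have ht : t = 1 := le_antisymm h2 h1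
  subst ht
  obtain ⟨F, ⟨hle, heq⟩, hpos⟩ := hsupp
  have hFE : F = E0 := by
    by_contra hne
    rw [hP] at hpos
    simp [hne] at hpos
  subst hFE
  rw [trunc_self] at heq
  subst heq
  set gNA : A → Option B := fun _ => none with hgNA
  set gNB : B → Option A := fun _ => none with hgNB
  have hgN' : ∀ (a : A) (b : B), gNA a = some b ↔ gNB b = some a := by simp [hgNA, hgNB]
  have hcompN : ∀ (a : A) (b : B), gNA a = some b → gNA a = some b := fun _ _ h => h
  refine ⟨?_, ?_, ?_⟩
  · -- DS2
    intro a ha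
    set mbar := mix m' F gNA gNB hgN' gNA gNB hgN' hcompN with hmbar
    have hpm1 : (mbar.pm F) = filteredPM gNA gNB hgN' F :=
      mix_pm_one m' F gNA gNB hgN' gNA gNB hgN' hcompN F (follows_self F)
    have hnoneA : ∀ a', (mbar.pm F).mA a' = none := by
      intro a'; rw [hpm1, filteredPM_mA]; exact filteredOpt_none rfl
    have hnoneB : ∀ b', (mbar.pm F).mB b' = none := by
      intro b'; rw [hpm1, filteredPM_mB]; exact filteredOpt_none rfl
    refine ⟨mbar, ⟨?_, ?_, ?_, ?_⟩, ?_⟩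
    · exact mix_sameOff' m' F gNA gNB hgN' gNA gNB hgN' hcompN
    · exact hnoneA a
    · refine ⟨?_, ?_, ?_⟩
      · intro a' _ b' hab; rw [hnoneA a'] at hab; cases hab
      · intro b' _ a' hab; rw [hnoneB b'] at hab; cases hab
      · rintro ⟨a', -, b', -, hs, -⟩
        rw [hnoneA a'] at hs
        simp at hs
    · refine ⟨m', DynStable_zero M _ m', ?_⟩
      intro s hs hle
      exact absurd hle (by omega)
    · rw [hUp mbar a, hUp m' a, hnoneA a]
      exact hIRA a
  · -- DS3
    intro b hb
    set mbar := mix m' F gNA gNB hgN' gNA gNB hgN' hcompN with hmbar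
    have hpm1 : (mbar.pm F) = filteredPM gNA gNB hgN' F :=
      mix_pm_one m' F gNA gNB hgN' gNA gNB hgN' hcompN F (follows_self F)
    have hnoneA : ∀ a', (mbar.pm F).mA a' = none := by
      intro a'; rw [hpm1, filteredPM_mA]; exact filteredOpt_none rfl
    have hnoneB : ∀ b', (mbar.pm F).mB b' = none := by
      intro b'; rw [hpm1, filteredPM_mB]; exact filteredOpt_none rfl
    refine ⟨mbar, ⟨?_, ?_, ?_, ?_⟩, ?_⟩
    · exact mix_sameOff' m' F gNA gNB hgN' gNA gNB hgN' hcompN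
    · exact hnoneB b
    · refine ⟨?_, ?_, ?_⟩
      · intro a' _ b' hab; rw [hnoneA a'] at hab; cases hab
      · intro b' _ a' hab; rw [hnoneB b'] at hab; cases hab
      · rintro ⟨a', -, b', -, hs, -⟩
        rw [hnoneA a'] at hs
        simp at hs
    · refine ⟨m', DynStable_zero M _ m', ?_⟩
      intro s hs hle
      exact absurd hle (by omega)
    · rw [hVp mbar b, hVp m' b, hnoneB b]
      exact hIRB b
  · -- DS1
    rintro ⟨a, ha, b, hb, h1', h2'⟩
    rw [hUp m' a] at h1'
    rw [hVp m' b] at h2'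
    exact hNB ⟨a, (Finset.mem_filter.1 ha).1, b, (Finset.mem_filter.1 hb).1, h1', h2'⟩

/-- the last-period step: DS at (t = 2, E) for a dirac economy -/
theorem lastStep (M : Market A B) (G : Economy A B 2) (E : Realization A B 2)
    (hP : G.prob = fun F => if F = E then 1 else 0) (m : Matching A B)
    (hIRA : ∀ a ∈ availA m E, 0 ≤ ((m.pm E).mA a).elim 0 (M.u a))
    (hIRB : ∀ b ∈ availB m E, 0 ≤ ((m.pm E).mB b).elim 0 (fun a => M.v a b))
    (hNB : ¬ ∃ a ∈ availA m E, ∃ b ∈ availB m E,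
        ((m.pm E).mA a).elim 0 (M.u a) < M.u a b ∧
        ((m.pm E).mB b).elim 0 (fun a' => M.v a' b) < M.v a b) :
    (∀ a ∈ availA m E, ∃ mbar ∈ ConjA M G E m a (DynStable M (2 - 2)),
        Upay M G mbar a E ≤ Upay M G m a E) ∧
    (∀ b ∈ availB m E, ∃ mbar ∈ ConjB M G E m b (DynStable M (2 - 2)),
        Vpay M G mbar b E ≤ Vpay M G m b E) ∧
    ¬ ∃ a ∈ availA m E, ∃ b ∈ availB m E,
        Upay M G m a E < M.u a b ∧ Vpay M G m b E < M.v a b := by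
  have hUp : ∀ (mm : Matching A B) (a : A),
      Upay M G mm a E = ((mm.pm E).mA a).elim 0 (M.u a) := by
    intro mm a
    rw [Upay_dirac M G E hP E (follows_self E) mm a, matchTimeA_last]
    simp
  have hVp : ∀ (mm : Matching A B) (b : B),
      Vpay M G mm b E = ((mm.pm E).mB b).elim 0 (fun a => M.v a b) := by
    intro mm b
    rw [Vpay_dirac M G E hP E (follows_self E) mm b, matchTimeB_last]
    simp
  have hnf : ¬ Follows (E.trunc (Nat.sub_le 2 1)) E := by
    rintro ⟨h2, -⟩
    omega
  have hpmoff : (keepFirst m E).pm (E.trunc (Nat.sub_le 2 1)) = m.pm (E.trunc (Nat.sub_le 2 1)) :=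
    keepFirst_pm_off m E _ hnf
  have havailA : availA (keepFirst m E) E = availA m E := by
    unfold availA
    rw [hpmoff]
  have havailB : availB (keepFirst m E) E = availB m E := by
    unfold availB
    rw [hpmoff]
  have hkey : ∀ a ∈ availA m E, ((keepFirst m E).pm E).mA a = none := by
    intro a ha
    rw [keepFirst_pm_E_mA]
    have := (Finset.mem_filter.1 ha).2
    exact this
  have hkeyB : ∀ b ∈ availB m E, ((keepFirst m E).pm E).mB b = none := by
    intro b hb
    rw [keepFirst_pm_E_mB]
    have := (Finset.mem_filter.1 hb).2
    exact this
  have hstable : StableAmongMatched M (keepFirst m E) E := by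
    refine ⟨?_, ?_, ?_⟩
    · intro a ha b hab
      rw [havailA] at ha
      rw [hkey a ha] at hab
      cases hab
    · intro b hb a hab
      rw [havailB] at hb
      rw [hkeyB b hb] at hab
      cases hab
    · rintro ⟨a, ha, b, hb, hs, -⟩
      rw [havailA] at ha
      rw [hkey a ha] at hs
      simp at hs
  refine ⟨?_, ?_, ?_⟩
  · intro a ha
    refine ⟨keepFirst m E, ⟨keepFirst_sameOff m E, hkey a ha, hstable, m, DynStable_zero M _ m,
      fun s hs hle => absurd hle (by omega)⟩, ?_⟩
    rw [hUp (keepFirst m E) a, hUp m a, hkey a ha]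
    exact hIRA a ha
  · intro b hb
    refine ⟨keepFirst m E, ⟨keepFirst_sameOff m E, hkeyB b hb, hstable, m, DynStable_zero M _ m,
      fun s hs hle => absurd hle (by omega)⟩, ?_⟩
    rw [hVp (keepFirst m E) b, hVp m b, hkeyB b hb]
    exact hIRB b hb
  · rintro ⟨a, ha, b, hb, h1', h2'⟩
    rw [hUp m a] at h1'
    rw [hVp m b] at h2'
    exact hNB ⟨a, ha, b, hb, h1', h2'⟩

theorem elim_filteredOpt_nonneg_u (M : Market A B) (gA : A → Option B)
    (hIRgA : ∀ a b, gA a = some b → 0 ≤ M.u a b) (X : Finset A) (Y : Finset B) (a : A) :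
    0 ≤ (filteredOpt gA X Y a).elim 0 (M.u a) := by
  cases hfo : filteredOpt gA X Y a with
  | none => simp
  | some b =>
    simp only [Option.elim_some]
    exact hIRgA a b (filteredOpt_eq_some.1 hfo).1

theorem elim_filteredOpt_nonneg_v (M : Market A B) (gB : B → Option A)
    (hIRgB : ∀ b a, gB b = some a → 0 ≤ M.v a b) (X : Finset B) (Y : Finset A) (b : B) :
    0 ≤ (filteredOpt gB X Y b).elim 0 (fun a => M.v a b) := by
  cases hfo : filteredOpt gB X Y b with
  | none => simp
  | some a =>
    simp only [Option.elim_some]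
    exact hIRgB b a (filteredOpt_eq_some.1 hfo).1

section core
variable (M : Market A B) (G : Economy A B 2) (E : Realization A B 2)
    (m : Matching A B) (E1 : Realization A B 1)
    (g1A : A → Option B) (g1B : B → Option A)
    (hg1 : ∀ a b, g1A a = some b ↔ g1B b = some a)
    (gA : A → Option B) (gB : B → Option A)
    (hg : ∀ a b, gA a = some b ↔ gB b = some a)
    (hcomp : ∀ a b, g1A a = some b → gA a = some b)

/-- key membership transfer: for a follower `F` of `E1` and an agent unmatched by `mbar`
in period 1, the continuation pools and the cumulated pools agree. -/
theorem mix_contAgrees_at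
    (hsafeA : ∀ a b, gA a = some b →
      filteredOpt g1A (E1.Abar 1) (E1.Bbar 1) a = none →
      filteredOpt g1B (E1.Bbar 1) (E1.Abar 1) b = none ∨ b ∉ E1.Bbar 1)
    (hsafeB : ∀ b a, gB b = some a →
      filteredOpt g1B (E1.Bbar 1) (E1.Abar 1) b = none →
      filteredOpt g1A (E1.Abar 1) (E1.Bbar 1) a = none ∨ a ∉ E1.Abar 1)
    (F : Realization A B 2) (hF : Follows F E1) :
    (∀ a : A, ((mix m E1 g1A g1B hg1 gA gB hg hcomp).pm E1).mA a = none →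
      ((gMatching gA gB hg).pm (contReal (mix m E1 g1A g1B hg1 gA gB hg hcomp) F 1)).mA a =
        ((mix m E1 g1A g1B hg1 gA gB hg hcomp).pm F).mA a) ∧
    (∀ b : B, ((mix m E1 g1A g1B hg1 gA gB hg hcomp).pm E1).mB b = none →
      ((gMatching gA gB hg).pm (contReal (mix m E1 g1A g1B hg1 gA gB hg hcomp) F 1)).mB b =
        ((mix m E1 g1A g1B hg1 gA gB hg hcomp).pm F).mB b) := by
  obtain ⟨hle', heq'⟩ := hF
  set mbar := mix m E1 g1A g1B hg1 gA gB hg hcomp with hmbar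
  have hpm1 : mbar.pm E1 = filteredPM g1A g1B hg1 E1 :=
    mix_pm_one m E1 g1A g1B hg1 gA gB hg hcomp E1 (follows_self E1)
  have hpmF : mbar.pm F = filteredPM gA gB hg F :=
    mix_pm_two m E1 g1A g1B hg1 gA gB hg hcomp F ⟨hle', heq'⟩
  have hC : ∀ x : A, x ∈ (contReal mbar F 1).Abar 1 ↔
      x ∈ unmatchedA mbar E1 ∪ F.arrA ⟨1, one_lt_two⟩ := by
    intro x
    rw [Abar_one]
    have harr : (contReal mbar F 1).arrA ⟨0, one_pos⟩ =
        unmatchedA mbar E1 ∪ F.arrA ⟨1, one_lt_two⟩ := by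
      have hrfl : (contReal mbar F 1).arrA ⟨0, one_pos⟩ =
          unmatchedA mbar (F.trunc one_le_two) ∪ F.arrA ⟨1, one_lt_two⟩ := rfl
      rw [hrfl, congrArg (unmatchedA mbar) heq']
    rw [harr]
  have hCB : ∀ x : B, x ∈ (contReal mbar F 1).Bbar 1 ↔
      x ∈ unmatchedB mbar E1 ∪ F.arrB ⟨1, one_lt_two⟩ := by
    intro x
    rw [Bbar_one]
    have harr : (contReal mbar F 1).arrB ⟨0, one_pos⟩ =
        unmatchedB mbar E1 ∪ F.arrB ⟨1, one_lt_two⟩ := by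
      have hrfl : (contReal mbar F 1).arrB ⟨0, one_pos⟩ =
          unmatchedB mbar (F.trunc one_le_two) ∪ F.arrB ⟨1, one_lt_two⟩ := rfl
      rw [hrfl, congrArg (unmatchedB mbar) heq']
    rw [harr]
  have hF0A : F.arrA ⟨0, by omega⟩ = E1.arrA ⟨0, one_pos⟩ := by
    rw [← heq']; rfl
  have hF0B : F.arrB ⟨0, by omega⟩ = E1.arrB ⟨0, one_pos⟩ := by
    rw [← heq']; rfl
  have hFA : ∀ x : A, x ∈ F.Abar 2 ↔ x ∈ E1.Abar 1 ∨ x ∈ F.arrA ⟨1, one_lt_two⟩ := by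
    intro x
    rw [Abar_two, Finset.mem_union, hF0A, Abar_one E1]
  have hFB : ∀ x : B, x ∈ F.Bbar 2 ↔ x ∈ E1.Bbar 1 ∨ x ∈ F.arrB ⟨1, one_lt_two⟩ := by
    intro x
    rw [Bbar_two, Finset.mem_union, hF0B, Bbar_one E1]
  have humA : ∀ x : A, (mbar.pm E1).mA x = none →
      (x ∈ unmatchedA mbar E1 ↔ x ∈ E1.Abar 1) := by
    intro x hx
    unfold unmatchedA
    rw [Finset.mem_filter]
    exact ⟨fun h => h.1, fun h => ⟨h, hx⟩⟩
  have humB : ∀ x : B, (mbar.pm E1).mB x = none →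
      (x ∈ unmatchedB mbar E1 ↔ x ∈ E1.Bbar 1) := by
    intro x hx
    unfold unmatchedB
    rw [Finset.mem_filter]
    exact ⟨fun h => h.1, fun h => ⟨h, hx⟩⟩
  have humA' : ∀ x : A, x ∉ E1.Abar 1 → x ∉ unmatchedA mbar E1 := by
    intro x hx hc
    exact hx (Finset.mem_filter.1 hc).1
  have humB' : ∀ x : B, x ∉ E1.Bbar 1 → x ∉ unmatchedB mbar E1 := by
    intro x hx hc
    exact hx (Finset.mem_filter.1 hc).1
  have hf1A : ∀ x : A, (mbar.pm E1).mA x = filteredOpt g1A (E1.Abar 1) (E1.Bbar 1) x := by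
    intro x; rw [hpm1]; rfl
  have hf1B : ∀ x : B, (mbar.pm E1).mB x = filteredOpt g1B (E1.Bbar 1) (E1.Abar 1) x := by
    intro x; rw [hpm1]; rfl
  constructor
  · -- A side
    intro a hnone
    have hL : ((gMatching gA gB hg).pm (contReal mbar F 1)).mA a =
        filteredOpt gA ((contReal mbar F 1).Abar 1) ((contReal mbar F 1).Bbar 1) a := rfl
    have hR : (mbar.pm F).mA a = filteredOpt gA (F.Abar 2) (F.Bbar 2) a := by
      rw [hpmF]; rfl
    rw [hL, hR]
    cases hga : gA a with
    | none => rw [filteredOpt_none hga, filteredOpt_none hga]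
    | some b =>
      have hAiff : a ∈ (contReal mbar F 1).Abar 1 ↔ a ∈ F.Abar 2 := by
        rw [hC a, hFA a, Finset.mem_union, humA a hnone]
      have hBiff : b ∈ (contReal mbar F 1).Bbar 1 ↔ b ∈ F.Bbar 2 := by
        rw [hCB b, hFB b, Finset.mem_union]
        rcases hsafeA a b hga (by rw [← hf1A a]; exact hnone) with hb | hb
        · rw [humB b (by rw [hf1B b]; exact hb)]
        · constructor
          · rintro (h | h)
            · exact absurd h (humB' b hb)
            · exact Or.inr h
          · rintro (h | h)
            · exact absurd h hb
            · exact Or.inr h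
      simp only [filteredOpt, hga, Option.bind_some]
      exact if_congr (and_congr hAiff hBiff) rfl rfl
  · -- B side
    intro b hnone
    have hL : ((gMatching gA gB hg).pm (contReal mbar F 1)).mB b =
        filteredOpt gB ((contReal mbar F 1).Bbar 1) ((contReal mbar F 1).Abar 1) b := rfl
    have hR : (mbar.pm F).mB b = filteredOpt gB (F.Bbar 2) (F.Abar 2) b := by
      rw [hpmF]; rfl
    rw [hL, hR]
    cases hgb : gB b with
    | none => rw [filteredOpt_none hgb, filteredOpt_none hgb]
    | some a =>
      have hBiff : b ∈ (contReal mbar F 1).Bbar 1 ↔ b ∈ F.Bbar 2 := by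
        rw [hCB b, hFB b, Finset.mem_union, humB b hnone]
      have hAiff : a ∈ (contReal mbar F 1).Abar 1 ↔ a ∈ F.Abar 2 := by
        rw [hC a, hFA a, Finset.mem_union]
        rcases hsafeB b a hgb (by rw [← hf1B b]; exact hnone) with ha | ha
        · rw [humA a (by rw [hf1A a]; exact ha)]
        · constructor
          · rintro (h | h)
            · exact absurd h (humA' a ha)
            · exact Or.inr h
          · rintro (h | h)
            · exact absurd h ha
            · exact Or.inr h
      simp only [filteredOpt, hgb, Option.bind_some]
      exact if_congr (and_congr hBiff hAiff) rfl rfl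

end core

section core2
variable (M : Market A B) (G : Economy A B 2) (E : Realization A B 2)
    (m : Matching A B) (E1 : Realization A B 1)
    (g1A : A → Option B) (g1B : B → Option A)
    (hg1 : ∀ a b, g1A a = some b ↔ g1B b = some a)
    (gA : A → Option B) (gB : B → Option A)
    (hg : ∀ a b, gA a = some b ↔ gB b = some a)
    (hcomp : ∀ a b, g1A a = some b → gA a = some b)

/-- the core conjecture lemma: the mixed matching is a valid conjecture at `(1, E1)` -/
theorem mixConj
    (hP : G.prob = fun F => if F = E then 1 else 0)
    (hE1 : Follows E E1)
    (hIR1A : ∀ a b, filteredOpt g1A (E1.Abar 1) (E1.Bbar 1) a = some b → 0 ≤ M.u a b)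
    (hIR1B : ∀ b a, filteredOpt g1B (E1.Bbar 1) (E1.Abar 1) b = some a → 0 ≤ M.v a b)
    (hNB1 : ¬ ∃ a ∈ E1.Abar 1, ∃ b ∈ E1.Bbar 1,
        (filteredOpt g1A (E1.Abar 1) (E1.Bbar 1) a).isSome ∧
        (filteredOpt g1B (E1.Bbar 1) (E1.Abar 1) b).isSome ∧
        (filteredOpt g1A (E1.Abar 1) (E1.Bbar 1) a).elim 0 (M.u a) < M.u a b ∧
        (filteredOpt g1B (E1.Bbar 1) (E1.Abar 1) b).elim 0 (fun a' => M.v a' b) < M.v a b)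
    (hsafeA : ∀ a b, gA a = some b →
      filteredOpt g1A (E1.Abar 1) (E1.Bbar 1) a = none →
      filteredOpt g1B (E1.Bbar 1) (E1.Abar 1) b = none ∨ b ∉ E1.Bbar 1)
    (hsafeB : ∀ b a, gB b = some a →
      filteredOpt g1B (E1.Bbar 1) (E1.Abar 1) b = none →
      filteredOpt g1A (E1.Abar 1) (E1.Bbar 1) a = none ∨ a ∉ E1.Abar 1)
    (hIRgA : ∀ a b, gA a = some b → 0 ≤ M.u a b)
    (hIRgB : ∀ b a, gB b = some a → 0 ≤ M.v a b)
    (PA : Finset A) (PB : Finset B)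
    (hPAc : ∀ x : A, x ∈ PA ↔
      (x ∈ E1.Abar 1 ∧ filteredOpt g1A (E1.Abar 1) (E1.Bbar 1) x = none) ∨
      x ∈ E.arrA ⟨1, one_lt_two⟩)
    (hPBc : ∀ x : B, x ∈ PB ↔
      (x ∈ E1.Bbar 1 ∧ filteredOpt g1B (E1.Bbar 1) (E1.Abar 1) x = none) ∨
      x ∈ E.arrB ⟨1, one_lt_two⟩)
    (hNB2 : ¬ ∃ a ∈ PA, ∃ b ∈ PB,
        (filteredOpt gA PA PB a).elim 0 (M.u a) < M.u a b ∧
        (filteredOpt gB PB PA b).elim 0 (fun a' => M.v a' b) < M.v a b) :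
    SameOff 2 m (mix m E1 g1A g1B hg1 gA gB hg hcomp) E1 ∧
    StableAmongMatched M (mix m E1 g1A g1B hg1 gA gB hg hcomp) E1 ∧
    (∃ m' ∈ DynStable M (2 - 1)
        (contEconomy G (mix m E1 g1A g1B hg1 gA gB hg hcomp) E1),
      ContAgrees 2 (mix m E1 g1A g1B hg1 gA gB hg hcomp) m' E1) := by
  set mbar := mix m E1 g1A g1B hg1 gA gB hg hcomp with hmbar
  have hpm1 : mbar.pm E1 = filteredPM g1A g1B hg1 E1 :=
    mix_pm_one m E1 g1A g1B hg1 gA gB hg hcomp E1 (follows_self E1)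
  have hf1A : ∀ x : A, (mbar.pm E1).mA x = filteredOpt g1A (E1.Abar 1) (E1.Bbar 1) x := by
    intro x; rw [hpm1]; rfl
  have hf1B : ∀ x : B, (mbar.pm E1).mB x = filteredOpt g1B (E1.Bbar 1) (E1.Abar 1) x := by
    intro x; rw [hpm1]; rfl
  refine ⟨mix_sameOff m E1 g1A g1B hg1 gA gB hg hcomp, ?_, ?_⟩
  · -- StableAmongMatched
    refine ⟨?_, ?_, ?_⟩
    · intro a _ b hab
      rw [hf1A a] at hab
      exact hIR1A a b hab
    · intro b _ a hab
      rw [hf1B b] at hab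
      exact hIR1B b a hab
    · rintro ⟨a, ha, b, hb, hsA, hsB, hlt1, hlt2⟩
      rw [hf1A a] at hsA hlt1
      rw [hf1B b] at hsB hlt2
      exact hNB1 ⟨a, (Finset.mem_filter.1 ha).1, b, (Finset.mem_filter.1 hb).1,
        hsA, hsB, hlt1, hlt2⟩
  · -- continuation
    have hprob : (contEconomy G mbar E1).prob =
        fun F' => if F' = contReal mbar E 1 then 1 else 0 :=
      contEconomy_prob G E hP mbar E1 hE1
    obtain ⟨hle', heq'⟩ := hE1
    -- pool identification
    have hmemA : ∀ x : A, x ∈ (contReal mbar E 1).Abar 1 ↔ x ∈ PA := by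
      intro x
      rw [Abar_one]
      have hrfl : (contReal mbar E 1).arrA ⟨0, one_pos⟩ =
          unmatchedA mbar (E.trunc one_le_two) ∪ E.arrA ⟨1, one_lt_two⟩ := rfl
      rw [hrfl, congrArg (unmatchedA mbar) heq', Finset.mem_union]
      unfold unmatchedA
      rw [Finset.mem_filter, hf1A x]
      exact (hPAc x).symm
    have hmemB : ∀ x : B, x ∈ (contReal mbar E 1).Bbar 1 ↔ x ∈ PB := by
      intro x
      rw [Bbar_one]
      have hrfl : (contReal mbar E 1).arrB ⟨0, one_pos⟩ =
          unmatchedB mbar (E.trunc one_le_two) ∪ E.arrB ⟨1, one_lt_two⟩ := rfl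
      rw [hrfl, congrArg (unmatchedB mbar) heq', Finset.mem_union]
      unfold unmatchedB
      rw [Finset.mem_filter, hf1B x]
      exact (hPBc x).symm
    have hoptA : ∀ a : A,
        ((gMatching gA gB hg).pm (contReal mbar E 1)).mA a = filteredOpt gA PA PB a := by
      intro a
      have hL : ((gMatching gA gB hg).pm (contReal mbar E 1)).mA a =
          filteredOpt gA ((contReal mbar E 1).Abar 1) ((contReal mbar E 1).Bbar 1) a := rfl
      rw [hL]
      cases hga : gA a with
      | none => rw [filteredOpt_none hga, filteredOpt_none hga]
      | some b =>
        simp only [filteredOpt, hga, Option.bind_some]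
        exact if_congr (and_congr (hmemA a) (hmemB b)) rfl rfl
    have hoptB : ∀ b : B,
        ((gMatching gA gB hg).pm (contReal mbar E 1)).mB b = filteredOpt gB PB PA b := by
      intro b
      have hL : ((gMatching gA gB hg).pm (contReal mbar E 1)).mB b =
          filteredOpt gB ((contReal mbar E 1).Bbar 1) ((contReal mbar E 1).Abar 1) b := rfl
      rw [hL]
      cases hgb : gB b with
      | none => rw [filteredOpt_none hgb, filteredOpt_none hgb]
      | some a =>
        simp only [filteredOpt, hgb, Option.bind_some]
        exact if_congr (and_congr (hmemB b) (hmemA a)) rfl rfl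
    refine ⟨gMatching gA gB hg, ?_, ?_⟩
    · -- dynamically stable for the continuation economy
      refine onePeriodStable M (contEconomy G mbar E1) (contReal mbar E 1) hprob
        (gMatching gA gB hg) ?_ ?_ ?_
      · intro a
        exact elim_filteredOpt_nonneg_u M gA hIRgA _ _ a
      · intro b
        exact elim_filteredOpt_nonneg_v M gB hIRgB _ _ b
      · rintro ⟨a, ha, b, hb, h1, h2⟩
        refine hNB2 ⟨a, (hmemA a).1 ha, b, (hmemB b).1 hb, ?_, ?_⟩
        · rw [← hoptA a]; exact h1
        · rw [← hoptB b]; exact h2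
    · -- ContAgrees
      intro s hs hle F hF
      have hs1 : s = 1 := by omega
      subst hs1
      exact mix_contAgrees_at m E1 g1A g1B hg1 gA gB hg hcomp hsafeA hsafeB F hF
end core2

/-- A-side wrapper: existence of a valid conjecture for deviator `a0` at `(1, E1)`. -/
theorem conjA_exists (M : Market A B) (G : Economy A B 2) (E : Realization A B 2)
    (m : Matching A B) (E1 : Realization A B 1)
    (g1A : A → Option B) (g1B : B → Option A)
    (hg1 : ∀ a b, g1A a = some b ↔ g1B b = some a)
    (gA : A → Option B) (gB : B → Option A)
    (hg : ∀ a b, gA a = some b ↔ gB b = some a)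
    (hcomp : ∀ a b, g1A a = some b → gA a = some b)
    (hP : G.prob = fun F => if F = E then 1 else 0)
    (hE1 : Follows E E1)
    (hIR1A : ∀ a b, filteredOpt g1A (E1.Abar 1) (E1.Bbar 1) a = some b → 0 ≤ M.u a b)
    (hIR1B : ∀ b a, filteredOpt g1B (E1.Bbar 1) (E1.Abar 1) b = some a → 0 ≤ M.v a b)
    (hNB1 : ¬ ∃ a ∈ E1.Abar 1, ∃ b ∈ E1.Bbar 1,
        (filteredOpt g1A (E1.Abar 1) (E1.Bbar 1) a).isSome ∧
        (filteredOpt g1B (E1.Bbar 1) (E1.Abar 1) b).isSome ∧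
        (filteredOpt g1A (E1.Abar 1) (E1.Bbar 1) a).elim 0 (M.u a) < M.u a b ∧
        (filteredOpt g1B (E1.Bbar 1) (E1.Abar 1) b).elim 0 (fun a' => M.v a' b) < M.v a b)
    (hsafeA : ∀ a b, gA a = some b →
      filteredOpt g1A (E1.Abar 1) (E1.Bbar 1) a = none →
      filteredOpt g1B (E1.Bbar 1) (E1.Abar 1) b = none ∨ b ∉ E1.Bbar 1)
    (hsafeB : ∀ b a, gB b = some a →
      filteredOpt g1B (E1.Bbar 1) (E1.Abar 1) b = none →
      filteredOpt g1A (E1.Abar 1) (E1.Bbar 1) a = none ∨ a ∉ E1.Abar 1)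
    (hIRgA : ∀ a b, gA a = some b → 0 ≤ M.u a b)
    (hIRgB : ∀ b a, gB b = some a → 0 ≤ M.v a b)
    (PA : Finset A) (PB : Finset B)
    (hPAc : ∀ x : A, x ∈ PA ↔
      (x ∈ E1.Abar 1 ∧ filteredOpt g1A (E1.Abar 1) (E1.Bbar 1) x = none) ∨
      x ∈ E.arrA ⟨1, one_lt_two⟩)
    (hPBc : ∀ x : B, x ∈ PB ↔
      (x ∈ E1.Bbar 1 ∧ filteredOpt g1B (E1.Bbar 1) (E1.Abar 1) x = none) ∨
      x ∈ E.arrB ⟨1, one_lt_two⟩)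
    (hNB2 : ¬ ∃ a ∈ PA, ∃ b ∈ PB,
        (filteredOpt gA PA PB a).elim 0 (M.u a) < M.u a b ∧
        (filteredOpt gB PB PA b).elim 0 (fun a' => M.v a' b) < M.v a b)
    (a0 : A)
    (hdev : filteredOpt g1A (E1.Abar 1) (E1.Bbar 1) a0 = none)
    (hpay : M.dA a0 * ((filteredOpt gA (E.Abar 2) (E.Bbar 2) a0).elim 0 (M.u a0)) ≤
      Upay M G m a0 E1) :
    ∃ mbar ∈ ConjA M G E1 m a0 (DynStable M (2 - 1)),
      Upay M G mbar a0 E1 ≤ Upay M G m a0 E1 := by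
  obtain ⟨hsame, hstab, hm'⟩ := mixConj M G E m E1 g1A g1B hg1 gA gB hg hcomp hP hE1
    hIR1A hIR1B hNB1 hsafeA hsafeB hIRgA hIRgB PA PB hPAc hPBc hNB2
  set mbar := mix m E1 g1A g1B hg1 gA gB hg hcomp with hmbar
  have hpm1 : mbar.pm E1 = filteredPM g1A g1B hg1 E1 :=
    mix_pm_one m E1 g1A g1B hg1 gA gB hg hcomp E1 (follows_self E1)
  have hdev' : (mbar.pm E1).mA a0 = none := by
    rw [hpm1]; exact hdev
  refine ⟨mbar, ⟨hsame, hdev', hstab, hm'⟩, ?_⟩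
  have hpmE : mbar.pm E = filteredPM gA gB hg E :=
    mix_pm_two m E1 g1A g1B hg1 gA gB hg hcomp E hE1
  rw [Upay_dirac M G E hP E1 hE1 mbar a0]
  have hmt : matchTimeA mbar E a0 1 = 2 := by
    apply matchTimeA_one_none
    obtain ⟨hle', heq'⟩ := hE1
    have heq'' : E.trunc one_le_two = E1 := heq'
    rw [heq'']
    exact hdev'
  rw [hmt]
  norm_num
  calc M.dA a0 * ((mbar.pm E).mA a0).elim 0 (M.u a0)
      = M.dA a0 * ((filteredOpt gA (E.Abar 2) (E.Bbar 2) a0).elim 0 (M.u a0)) := by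
        rw [hpmE]; rfl
    _ ≤ Upay M G m a0 E1 := hpay

/-- B-side wrapper: existence of a valid conjecture for deviator `b0` at `(1, E1)`. -/
theorem conjB_exists (M : Market A B) (G : Economy A B 2) (E : Realization A B 2)
    (m : Matching A B) (E1 : Realization A B 1)
    (g1A : A → Option B) (g1B : B → Option A)
    (hg1 : ∀ a b, g1A a = some b ↔ g1B b = some a)
    (gA : A → Option B) (gB : B → Option A)
    (hg : ∀ a b, gA a = some b ↔ gB b = some a)
    (hcomp : ∀ a b, g1A a = some b → gA a = some b)
    (hP : G.prob = fun F => if F = E then 1 else 0)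
    (hE1 : Follows E E1)
    (hIR1A : ∀ a b, filteredOpt g1A (E1.Abar 1) (E1.Bbar 1) a = some b → 0 ≤ M.u a b)
    (hIR1B : ∀ b a, filteredOpt g1B (E1.Bbar 1) (E1.Abar 1) b = some a → 0 ≤ M.v a b)
    (hNB1 : ¬ ∃ a ∈ E1.Abar 1, ∃ b ∈ E1.Bbar 1,
        (filteredOpt g1A (E1.Abar 1) (E1.Bbar 1) a).isSome ∧
        (filteredOpt g1B (E1.Bbar 1) (E1.Abar 1) b).isSome ∧
        (filteredOpt g1A (E1.Abar 1) (E1.Bbar 1) a).elim 0 (M.u a) < M.u a b ∧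
        (filteredOpt g1B (E1.Bbar 1) (E1.Abar 1) b).elim 0 (fun a' => M.v a' b) < M.v a b)
    (hsafeA : ∀ a b, gA a = some b →
      filteredOpt g1A (E1.Abar 1) (E1.Bbar 1) a = none →
      filteredOpt g1B (E1.Bbar 1) (E1.Abar 1) b = none ∨ b ∉ E1.Bbar 1)
    (hsafeB : ∀ b a, gB b = some a →
      filteredOpt g1B (E1.Bbar 1) (E1.Abar 1) b = none →
      filteredOpt g1A (E1.Abar 1) (E1.Bbar 1) a = none ∨ a ∉ E1.Abar 1)
    (hIRgA : ∀ a b, gA a = some b → 0 ≤ M.u a b)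
    (hIRgB : ∀ b a, gB b = some a → 0 ≤ M.v a b)
    (PA : Finset A) (PB : Finset B)
    (hPAc : ∀ x : A, x ∈ PA ↔
      (x ∈ E1.Abar 1 ∧ filteredOpt g1A (E1.Abar 1) (E1.Bbar 1) x = none) ∨
      x ∈ E.arrA ⟨1, one_lt_two⟩)
    (hPBc : ∀ x : B, x ∈ PB ↔
      (x ∈ E1.Bbar 1 ∧ filteredOpt g1B (E1.Bbar 1) (E1.Abar 1) x = none) ∨
      x ∈ E.arrB ⟨1, one_lt_two⟩)
    (hNB2 : ¬ ∃ a ∈ PA, ∃ b ∈ PB,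
        (filteredOpt gA PA PB a).elim 0 (M.u a) < M.u a b ∧
        (filteredOpt gB PB PA b).elim 0 (fun a' => M.v a' b) < M.v a b)
    (b0 : B)
    (hdev : filteredOpt g1B (E1.Bbar 1) (E1.Abar 1) b0 = none)
    (hpay : M.dB b0 * ((filteredOpt gB (E.Bbar 2) (E.Abar 2) b0).elim 0
      (fun a => M.v a b0)) ≤ Vpay M G m b0 E1) :
    ∃ mbar ∈ ConjB M G E1 m b0 (DynStable M (2 - 1)),
      Vpay M G mbar b0 E1 ≤ Vpay M G m b0 E1 := by
  obtain ⟨hsame, hstab, hm'⟩ := mixConj M G E m E1 g1A g1B hg1 gA gB hg hcomp hP hE1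
    hIR1A hIR1B hNB1 hsafeA hsafeB hIRgA hIRgB PA PB hPAc hPBc hNB2
  set mbar := mix m E1 g1A g1B hg1 gA gB hg hcomp with hmbar
  have hpm1 : mbar.pm E1 = filteredPM g1A g1B hg1 E1 :=
    mix_pm_one m E1 g1A g1B hg1 gA gB hg hcomp E1 (follows_self E1)
  have hdev' : (mbar.pm E1).mB b0 = none := by
    rw [hpm1]; exact hdev
  refine ⟨mbar, ⟨hsame, hdev', hstab, hm'⟩, ?_⟩
  have hpmE : mbar.pm E = filteredPM gA gB hg E :=
    mix_pm_two m E1 g1A g1B hg1 gA gB hg hcomp E hE1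
  rw [Vpay_dirac M G E hP E1 hE1 mbar b0]
  have hmt : matchTimeB mbar E b0 1 = 2 := by
    apply matchTimeB_one_none
    obtain ⟨hle', heq'⟩ := hE1
    have heq'' : E.trunc one_le_two = E1 := heq'
    rw [heq'']
    exact hdev'
  rw [hmt]
  norm_num
  calc M.dB b0 * ((mbar.pm E).mB b0).elim 0 (fun a => M.v a b0)
      = M.dB b0 * ((filteredOpt gB (E.Bbar 2) (E.Abar 2) b0).elim 0 (fun a => M.v a b0)) := by
        rw [hpmE]; rfl
    _ ≤ Vpay M G m b0 E1 := hpay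

/-- explicit three-pair partial matching -/
def tri {α β : Type} [DecidableEq α] (x1 x2 x3 : α) (y1 y2 y3 : β) : α → Option β :=
  fun x => if x = x1 then some y1 else if x = x2 then some y2 else
    if x = x3 then some y3 else none

section tri
variable {α β : Type} [DecidableEq α] {x1 x2 x3 : α} {y1 y2 y3 : β}

theorem tri_eq_some (h12 : x1 ≠ x2) (h13 : x1 ≠ x3) (h23 : x2 ≠ x3) {x : α} {y : β} :
    tri x1 x2 x3 y1 y2 y3 x = some y ↔
      (x = x1 ∧ y = y1) ∨ (x = x2 ∧ y = y2) ∨ (x = x3 ∧ y = y3) := by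
  unfold tri
  by_cases h1 : x = x1
  · subst h1
    rw [if_pos rfl]
    constructor
    · intro h; exact Or.inl ⟨rfl, (Option.some.inj h).symm⟩
    · rintro (⟨-, rfl⟩ | ⟨hx, -⟩ | ⟨hx, -⟩)
      · rfl
      · exact absurd hx h12
      · exact absurd hx h13
  · rw [if_neg h1]
    by_cases h2 : x = x2
    · subst h2
      rw [if_pos rfl]
      constructor
      · intro h; exact Or.inr (Or.inl ⟨rfl, (Option.some.inj h).symm⟩)
      · rintro (⟨hx, -⟩ | ⟨-, rfl⟩ | ⟨hx, -⟩)
        · exact absurd hx h1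
        · rfl
        · exact absurd hx h23
    · rw [if_neg h2]
      by_cases h3 : x = x3
      · subst h3
        rw [if_pos rfl]
        constructor
        · intro h; exact Or.inr (Or.inr ⟨rfl, (Option.some.inj h).symm⟩)
        · rintro (⟨hx, -⟩ | ⟨hx, -⟩ | ⟨-, rfl⟩)
          · exact absurd hx h1
          · exact absurd hx h2
          · rfl
      · rw [if_neg h3]
        constructor
        · intro h; cases h
        · rintro (⟨hx, -⟩ | ⟨hx, -⟩ | ⟨hx, -⟩)
          · exact absurd hx h1
          · exact absurd hx h2
          · exact absurd hx h3

theorem tri_fst : tri x1 x2 x3 y1 y2 y3 x1 = some y1 := by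
  unfold tri; rw [if_pos rfl]

theorem tri_snd (h : x2 ≠ x1) : tri x1 x2 x3 y1 y2 y3 x2 = some y2 := by
  unfold tri; rw [if_neg h, if_pos rfl]

theorem tri_thd (h1 : x3 ≠ x1) (h2 : x3 ≠ x2) : tri x1 x2 x3 y1 y2 y3 x3 = some y3 := by
  unfold tri; rw [if_neg h1, if_neg h2, if_pos rfl]

theorem tri_none {x : α} (hx1 : x ≠ x1) (hx2 : x ≠ x2) (hx3 : x ≠ x3) :
    tri x1 x2 x3 y1 y2 y3 x = none := by
  unfold tri; rw [if_neg hx1, if_neg hx2, if_neg hx3]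

end tri

theorem tri_inv {α β : Type} [DecidableEq α] [DecidableEq β] {x1 x2 x3 : α} {y1 y2 y3 : β}
    (hx12 : x1 ≠ x2) (hx13 : x1 ≠ x3) (hx23 : x2 ≠ x3)
    (hy12 : y1 ≠ y2) (hy13 : y1 ≠ y3) (hy23 : y2 ≠ y3) :
    ∀ (a : α) (b : β), tri x1 x2 x3 y1 y2 y3 a = some b ↔ tri y1 y2 y3 x1 x2 x3 b = some a := by
  intro a b
  rw [tri_eq_some hx12 hx13 hx23, tri_eq_some hy12 hy13 hy23]
  tauto

theorem filteredOpt_some_of {α β : Type} {g : α → Option β} {X : Finset α} {Y : Finset β}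
    {a : α} {b : β} (h : g a = some b) (ha : a ∈ X) (hb : b ∈ Y) :
    filteredOpt g X Y a = some b :=
  filteredOpt_eq_some.2 ⟨h, ha, hb⟩

theorem filteredOpt_none_right {α β : Type} {g : α → Option β} {X : Finset α} {Y : Finset β}
    {a : α} {b : β} (h : g a = some b) (hb : b ∉ Y) : filteredOpt g X Y a = none := by
  unfold filteredOpt
  rw [h, Option.bind_some, if_neg (fun hc => hb hc.2)]

theorem filteredOpt_none_left {α β : Type} {g : α → Option β} {X : Finset α} {Y : Finset β}
    {a : α} {b : β} (h : g a = some b) (ha : a ∉ X) : filteredOpt g X Y a = none := by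
  unfold filteredOpt
  rw [h, Option.bind_some, if_neg (fun hc => ha hc.1)]

set_option maxHeartbeats 1000000

/-- In the two-period economy with `A₁ = {a11,a12}`, `B₁ = {b11}`,
`A₂ = {a21,a22}`, `B₂ = {b21,b22}` and the stated preferences, both `m^L` (period 1:
`a11–b11`; period 2: `a21–b21`, `a22–b22`; `a12` unmatched) and `m^R` (period 1:
`a12–b11`; period 2: `a11–b21`, `a22–b22`; `a21` unmatched) are dynamically stable,
and they leave different sets of agents unmatched: the Lone Wolf theorem fails. -/
theorem lone_wolf_failure_example {A B : Type} [Fintype A] [Fintype B]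
    [DecidableEq A] [DecidableEq B] (M : Market A B)
    (a11 a12 a21 a22 : A) (b11 b21 b22 : B)
    (hA1 : a11 ≠ a12) (hA2 : a11 ≠ a21) (hA3 : a11 ≠ a22) (hA4 : a12 ≠ a21)
    (hA5 : a12 ≠ a22) (hA6 : a21 ≠ a22)
    (hB1 : b11 ≠ b21) (hB2 : b11 ≠ b22) (hB3 : b21 ≠ b22)
    (E : Realization A B 2)
    (harrA0 : E.arrA ⟨0, by omega⟩ = {a11, a12})
    (harrA1 : E.arrA ⟨1, by omega⟩ = {a21, a22})
    (harrB0 : E.arrB ⟨0, by omega⟩ = {b11})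
    (harrB1 : E.arrB ⟨1, by omega⟩ = {b21, b22})
    (G : Economy A B 2) (hG : ∀ F : Realization A B 2, 0 < G.prob F ↔ F = E)
    -- a11: (b21,1) ≻ (b22,0) ≻ (b11,0) ≻ (b22,1) ≻ single
    (h11_1 : M.u a11 b22 < M.dA a11 * M.u a11 b21)
    (h11_2 : M.u a11 b11 < M.u a11 b22)
    (h11_3 : M.dA a11 * M.u a11 b22 < M.u a11 b11)
    (h11_4 : 0 < M.dA a11 * M.u a11 b22)
    -- a12: b11 ≻ single ≻ b21, b22
    (h12_1 : 0 < M.u a12 b11) (h12_2 : M.u a12 b21 < 0) (h12_3 : M.u a12 b22 < 0)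
    -- a21: b21 ≻ single ≻ b11, b22
    (h21_1 : 0 < M.u a21 b21) (h21_2 : M.u a21 b11 < 0) (h21_3 : M.u a21 b22 < 0)
    -- a22: b22 ≻ b21 ≻ single ≻ b11
    (h22_1 : M.u a22 b21 < M.u a22 b22) (h22_2 : 0 < M.u a22 b21) (h22_3 : M.u a22 b11 < 0)
    -- b11: a11 ≻ a12 ≻ single ≻ a21, a22
    (hb11_1 : M.v a12 b11 < M.v a11 b11) (hb11_2 : 0 < M.v a12 b11)
    (hb11_3 : M.v a21 b11 < 0) (hb11_4 : M.v a22 b11 < 0)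
    -- b21: a22 ≻ a11 ≻ a21 ≻ single ≻ a12
    (hb21_1 : M.v a11 b21 < M.v a22 b21) (hb21_2 : M.v a21 b21 < M.v a11 b21)
    (hb21_3 : 0 < M.v a21 b21) (hb21_4 : M.v a12 b21 < 0)
    -- b22: a11 ≻ a22 ≻ single ≻ a12, a21
    (hb22_1 : M.v a22 b22 < M.v a11 b22) (hb22_2 : 0 < M.v a22 b22)
    (hb22_3 : M.v a12 b22 < 0) (hb22_4 : M.v a21 b22 < 0)
    (mL mR : Matching A B)
    (hL1_11 : (mL.pm (E.trunc (by omega : (1:ℕ) ≤ 2))).mA a11 = some b11)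
    (hL1_12 : (mL.pm (E.trunc (by omega : (1:ℕ) ≤ 2))).mA a12 = none)
    (hL2_11 : (mL.pm E).mA a11 = some b11)
    (hL2_12 : (mL.pm E).mA a12 = none)
    (hL2_21 : (mL.pm E).mA a21 = some b21)
    (hL2_22 : (mL.pm E).mA a22 = some b22)
    (hR1_12 : (mR.pm (E.trunc (by omega : (1:ℕ) ≤ 2))).mA a12 = some b11)
    (hR1_11 : (mR.pm (E.trunc (by omega : (1:ℕ) ≤ 2))).mA a11 = none)
    (hR2_12 : (mR.pm E).mA a12 = some b11)
    (hR2_11 : (mR.pm E).mA a11 = some b21)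
    (hR2_21 : (mR.pm E).mA a21 = none)
    (hR2_22 : (mR.pm E).mA a22 = some b22) :
    mL ∈ DynStable M 2 G ∧ mR ∈ DynStable M 2 G ∧
    (mL.pm E).mA a12 = none ∧ (mR.pm E).mA a12 ≠ none ∧
    (mR.pm E).mA a21 = none ∧ (mL.pm E).mA a21 ≠ none := by
  classical
  have hP : G.prob = fun F => if F = E then 1 else 0 := prob_dirac G E hG
  have hE1F : Follows E (E.trunc one_le_two) := ⟨one_le_two, rfl⟩
  -- pools
  have hA1set : ∀ x : A, x ∈ (E.trunc one_le_two).Abar 1 ↔ x = a11 ∨ x = a12 := by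
    intro x
    rw [Abar_one]
    have h0 : (E.trunc one_le_two).arrA ⟨0, one_pos⟩ = ({a11, a12} : Finset A) := harrA0
    rw [h0]
    simp
  have hB1set : ∀ x : B, x ∈ (E.trunc one_le_two).Bbar 1 ↔ x = b11 := by
    intro x
    rw [Bbar_one]
    have h0 : (E.trunc one_le_two).arrB ⟨0, one_pos⟩ = ({b11} : Finset B) := harrB0
    rw [h0]
    simp
  have hA2set : ∀ x : A, x ∈ E.Abar 2 ↔ x = a11 ∨ x = a12 ∨ x = a21 ∨ x = a22 := by
    intro x
    rw [abar_two_mem, harrA0, harrA1]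
    simp [or_assoc]
  have hB2set : ∀ x : B, x ∈ E.Bbar 2 ↔ x = b11 ∨ x = b21 ∨ x = b22 := by
    intro x
    rw [bbar_two_mem, harrB0, harrB1]
    simp [or_assoc]
  have harr1A : ∀ x : A, x ∈ E.arrA ⟨1, one_lt_two⟩ ↔ x = a21 ∨ x = a22 := by
    intro x
    have h1 : E.arrA ⟨1, one_lt_two⟩ = ({a21, a22} : Finset A) := harrA1
    rw [h1]
    simp
  have harr1B : ∀ x : B, x ∈ E.arrB ⟨1, one_lt_two⟩ ↔ x = b21 ∨ x = b22 := by
    intro x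
    have h1 : E.arrB ⟨1, one_lt_two⟩ = ({b21, b22} : Finset B) := harrB1
    rw [h1]
    simp
  -- membership shorthands
  have hA1_11 : a11 ∈ (E.trunc one_le_two).Abar 1 := (hA1set a11).2 (Or.inl rfl)
  have hA1_12 : a12 ∈ (E.trunc one_le_two).Abar 1 := (hA1set a12).2 (Or.inr rfl)
  have hB1_11 : b11 ∈ (E.trunc one_le_two).Bbar 1 := (hB1set b11).2 rfl
  have hA1n21 : a21 ∉ (E.trunc one_le_two).Abar 1 := by
    intro h
    rcases (hA1set a21).1 h with h' | h'
    · exact hA2 h'.symm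
    · exact hA4 h'.symm
  have hA1n22 : a22 ∉ (E.trunc one_le_two).Abar 1 := by
    intro h
    rcases (hA1set a22).1 h with h' | h'
    · exact hA3 h'.symm
    · exact hA5 h'.symm
  have hB1n21 : b21 ∉ (E.trunc one_le_two).Bbar 1 := fun h => hB1 ((hB1set b21).1 h).symm
  have hB1n22 : b22 ∉ (E.trunc one_le_two).Bbar 1 := fun h => hB2 ((hB1set b22).1 h).symm
  have hA2_11 : a11 ∈ E.Abar 2 := (hA2set a11).2 (Or.inl rfl)
  have hA2_12 : a12 ∈ E.Abar 2 := (hA2set a12).2 (Or.inr (Or.inl rfl))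
  have hA2_21 : a21 ∈ E.Abar 2 := (hA2set a21).2 (Or.inr (Or.inr (Or.inl rfl)))
  have hA2_22 : a22 ∈ E.Abar 2 := (hA2set a22).2 (Or.inr (Or.inr (Or.inr rfl)))
  have hB2_11 : b11 ∈ E.Bbar 2 := (hB2set b11).2 (Or.inl rfl)
  have hB2_21 : b21 ∈ E.Bbar 2 := (hB2set b21).2 (Or.inr (Or.inl rfl))
  have hB2_22 : b22 ∈ E.Bbar 2 := (hB2set b22).2 (Or.inr (Or.inr rfl))
  -- positivity facts
  have hdApos : 0 < M.dA a11 := by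
    rcases (M.dA_nonneg a11).lt_or_eq with h | h
    · exact h
    · rw [← h] at h11_4; simp at h11_4
  have hu11b22 : 0 < M.u a11 b22 := by
    by_contra hc
    push_neg at hc
    nlinarith [mul_nonneg (M.dA_nonneg a11) (neg_nonneg.2 hc)]
  have hu11b21 : 0 < M.u a11 b21 := by
    by_contra hc
    push_neg at hc
    nlinarith [mul_nonneg (M.dA_nonneg a11) (neg_nonneg.2 hc)]
  have hu11b11 : 0 < M.u a11 b11 := by linarith
  have hu22b22 : 0 < M.u a22 b22 := by linarith
  have hv11b11 : 0 < M.v a11 b11 := by linarith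
  have hv11b21 : 0 < M.v a11 b21 := by linarith
  have hv22b21 : 0 < M.v a22 b21 := by linarith
  have hv11b22 : 0 < M.v a11 b22 := by linarith
  have hu2221 : M.u a11 b22 < M.u a11 b21 := by
    nlinarith [mul_nonneg (sub_nonneg.2 (M.dA_lt_one a11).le) hu11b21.le]
  -- none-by-membership helpers
  have hnotmemA : ∀ (p : PeriodMatching (E.trunc one_le_two)) (x : A),
      x ∉ (E.trunc one_le_two).Abar 1 → p.mA x = none := by
    intro p x hx
    cases h : p.mA x with
    | none => rfl
    | some y => exact absurd (p.memA x y h).1 hx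
  have hnotmemB : ∀ (p : PeriodMatching (E.trunc one_le_two)) (x : B),
      x ∉ (E.trunc one_le_two).Bbar 1 → p.mB x = none := by
    intro p x hx
    cases h : p.mB x with
    | none => rfl
    | some y =>
      have := (p.memA y x ((p.inv y x).2 h)).2
      exact absurd this hx
  -- the three assignments
  set gYA : A → Option B := tri a11 a12 a22 b22 b11 b21 with hgYAdef
  set gYB : B → Option A := tri b22 b11 b21 a11 a12 a22 with hgYBdef
  set gLA : A → Option B := tri a11 a21 a22 b11 b21 b22 with hgLAdef
  set gLB : B → Option A := tri b11 b21 b22 a11 a21 a22 with hgLBdef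
  set gXA : A → Option B := tri a11 a12 a22 b21 b11 b22 with hgXAdef
  set gXB : B → Option A := tri b21 b11 b22 a11 a12 a22 with hgXBdef
  set gNA : A → Option B := fun _ => none with hgNAdef
  set gNB : B → Option A := fun _ => none with hgNBdef
  have hgYinv : ∀ a b, gYA a = some b ↔ gYB b = some a :=
    tri_inv hA1 hA3 hA5 (Ne.symm hB2) (Ne.symm hB3) hB1
  have hgLinv : ∀ a b, gLA a = some b ↔ gLB b = some a :=
    tri_inv hA2 hA3 hA6 hB1 hB2 hB3
  have hgXinv : ∀ a b, gXA a = some b ↔ gXB b = some a :=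
    tri_inv hA1 hA3 hA5 (Ne.symm hB1) hB3 hB2
  have hgNinv : ∀ a b, gNA a = some b ↔ gNB b = some a := by
    intro a b
    rw [hgNAdef, hgNBdef]
    simp
  have hcompN : ∀ a b, gNA a = some b → gYA a = some b := by
    intro a b h
    rw [hgNAdef] at h
    cases h
  -- value tables
  have hgY_a11 : gYA a11 = some b22 := tri_fst
  have hgY_a12 : gYA a12 = some b11 := tri_snd (Ne.symm hA1)
  have hgY_a22 : gYA a22 = some b21 := tri_thd (Ne.symm hA3) (Ne.symm hA5)
  have hgY_a21 : gYA a21 = none := tri_none (Ne.symm hA2) (Ne.symm hA4) hA6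
  have hgYB_b22 : gYB b22 = some a11 := tri_fst
  have hgYB_b11 : gYB b11 = some a12 := tri_snd hB2
  have hgYB_b21 : gYB b21 = some a22 := tri_thd hB3 (Ne.symm hB1)
  have hgL_a11 : gLA a11 = some b11 := tri_fst
  have hgL_a21 : gLA a21 = some b21 := tri_snd (Ne.symm hA2)
  have hgL_a22 : gLA a22 = some b22 := tri_thd (Ne.symm hA3) (Ne.symm hA6)
  have hgL_a12 : gLA a12 = none := tri_none (Ne.symm hA1) hA4 hA5
  have hgLB_b11 : gLB b11 = some a11 := tri_fst
  have hgLB_b21 : gLB b21 = some a21 := tri_snd (Ne.symm hB1)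
  have hgLB_b22 : gLB b22 = some a22 := tri_thd (Ne.symm hB2) (Ne.symm hB3)
  have hgX_a11 : gXA a11 = some b21 := tri_fst
  have hgX_a12 : gXA a12 = some b11 := tri_snd (Ne.symm hA1)
  have hgX_a22 : gXA a22 = some b22 := tri_thd (Ne.symm hA3) (Ne.symm hA5)
  have hgX_a21 : gXA a21 = none := tri_none (Ne.symm hA2) (Ne.symm hA4) hA6
  have hgXB_b21 : gXB b21 = some a11 := tri_fst
  have hgXB_b11 : gXB b11 = some a12 := tri_snd hB1
  have hgXB_b22 : gXB b22 = some a22 := tri_thd (Ne.symm hB3) (Ne.symm hB2)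
  -- period-1 filtered values
  have hfY11 : filteredOpt gYA ((E.trunc one_le_two).Abar 1) ((E.trunc one_le_two).Bbar 1)
      a11 = none := filteredOpt_none_right hgY_a11 hB1n22
  have hfY12 : filteredOpt gYA ((E.trunc one_le_two).Abar 1) ((E.trunc one_le_two).Bbar 1)
      a12 = some b11 := filteredOpt_some_of hgY_a12 hA1_12 hB1_11
  have hfYB11 : filteredOpt gYB ((E.trunc one_le_two).Bbar 1) ((E.trunc one_le_two).Abar 1)
      b11 = some a12 := filteredOpt_some_of hgYB_b11 hB1_11 hA1_12
  have hfL11 : filteredOpt gLA ((E.trunc one_le_two).Abar 1) ((E.trunc one_le_two).Bbar 1)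
      a11 = some b11 := filteredOpt_some_of hgL_a11 hA1_11 hB1_11
  have hfL12 : filteredOpt gLA ((E.trunc one_le_two).Abar 1) ((E.trunc one_le_two).Bbar 1)
      a12 = none := filteredOpt_none hgL_a12
  have hfLB11 : filteredOpt gLB ((E.trunc one_le_two).Bbar 1) ((E.trunc one_le_two).Abar 1)
      b11 = some a11 := filteredOpt_some_of hgLB_b11 hB1_11 hA1_11
  have hfX11 : filteredOpt gXA ((E.trunc one_le_two).Abar 1) ((E.trunc one_le_two).Bbar 1)
      a11 = none := filteredOpt_none_right hgX_a11 hB1n21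
  have hfX12 : filteredOpt gXA ((E.trunc one_le_two).Abar 1) ((E.trunc one_le_two).Bbar 1)
      a12 = some b11 := filteredOpt_some_of hgX_a12 hA1_12 hB1_11
  have hfXB11 : filteredOpt gXB ((E.trunc one_le_two).Bbar 1) ((E.trunc one_le_two).Abar 1)
      b11 = some a12 := filteredOpt_some_of hgXB_b11 hB1_11 hA1_12
  have hfN : ∀ x : A, filteredOpt gNA ((E.trunc one_le_two).Abar 1)
      ((E.trunc one_le_two).Bbar 1) x = none := fun x => filteredOpt_none (by rw [hgNAdef])
  have hfNB : ∀ y : B, filteredOpt gNB ((E.trunc one_le_two).Bbar 1)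
      ((E.trunc one_le_two).Abar 1) y = none := fun y => filteredOpt_none (by rw [hgNBdef])
  -- continuation pools
  set PAY : Finset A := ((E.trunc one_le_two).Abar 1).filter
      (fun a => filteredOpt gYA ((E.trunc one_le_two).Abar 1)
        ((E.trunc one_le_two).Bbar 1) a = none) ∪ E.arrA ⟨1, one_lt_two⟩ with hPAYdef
  set PBY : Finset B := ((E.trunc one_le_two).Bbar 1).filter
      (fun b => filteredOpt gYB ((E.trunc one_le_two).Bbar 1)
        ((E.trunc one_le_two).Abar 1) b = none) ∪ E.arrB ⟨1, one_lt_two⟩ with hPBYdef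
  set PAL : Finset A := ((E.trunc one_le_two).Abar 1).filter
      (fun a => filteredOpt gLA ((E.trunc one_le_two).Abar 1)
        ((E.trunc one_le_two).Bbar 1) a = none) ∪ E.arrA ⟨1, one_lt_two⟩ with hPALdef
  set PBL : Finset B := ((E.trunc one_le_two).Bbar 1).filter
      (fun b => filteredOpt gLB ((E.trunc one_le_two).Bbar 1)
        ((E.trunc one_le_two).Abar 1) b = none) ∪ E.arrB ⟨1, one_lt_two⟩ with hPBLdef
  set PAX : Finset A := ((E.trunc one_le_two).Abar 1).filter
      (fun a => filteredOpt gXA ((E.trunc one_le_two).Abar 1)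
        ((E.trunc one_le_two).Bbar 1) a = none) ∪ E.arrA ⟨1, one_lt_two⟩ with hPAXdef
  set PBX : Finset B := ((E.trunc one_le_two).Bbar 1).filter
      (fun b => filteredOpt gXB ((E.trunc one_le_two).Bbar 1)
        ((E.trunc one_le_two).Abar 1) b = none) ∪ E.arrB ⟨1, one_lt_two⟩ with hPBXdef
  set PAN : Finset A := ((E.trunc one_le_two).Abar 1).filter
      (fun a => filteredOpt gNA ((E.trunc one_le_two).Abar 1)
        ((E.trunc one_le_two).Bbar 1) a = none) ∪ E.arrA ⟨1, one_lt_two⟩ with hPANdef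
  set PBN : Finset B := ((E.trunc one_le_two).Bbar 1).filter
      (fun b => filteredOpt gNB ((E.trunc one_le_two).Bbar 1)
        ((E.trunc one_le_two).Abar 1) b = none) ∪ E.arrB ⟨1, one_lt_two⟩ with hPBNdef
  have hPAYc : ∀ x : A, x ∈ PAY ↔
      (x ∈ (E.trunc one_le_two).Abar 1 ∧ filteredOpt gYA ((E.trunc one_le_two).Abar 1)
        ((E.trunc one_le_two).Bbar 1) x = none) ∨ x ∈ E.arrA ⟨1, one_lt_two⟩ := by
    intro x
    rw [hPAYdef, Finset.mem_union, Finset.mem_filter]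
  have hPBYc : ∀ x : B, x ∈ PBY ↔
      (x ∈ (E.trunc one_le_two).Bbar 1 ∧ filteredOpt gYB ((E.trunc one_le_two).Bbar 1)
        ((E.trunc one_le_two).Abar 1) x = none) ∨ x ∈ E.arrB ⟨1, one_lt_two⟩ := by
    intro x
    rw [hPBYdef, Finset.mem_union, Finset.mem_filter]
  have hPALc : ∀ x : A, x ∈ PAL ↔
      (x ∈ (E.trunc one_le_two).Abar 1 ∧ filteredOpt gLA ((E.trunc one_le_two).Abar 1)
        ((E.trunc one_le_two).Bbar 1) x = none) ∨ x ∈ E.arrA ⟨1, one_lt_two⟩ := by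
    intro x
    rw [hPALdef, Finset.mem_union, Finset.mem_filter]
  have hPBLc : ∀ x : B, x ∈ PBL ↔
      (x ∈ (E.trunc one_le_two).Bbar 1 ∧ filteredOpt gLB ((E.trunc one_le_two).Bbar 1)
        ((E.trunc one_le_two).Abar 1) x = none) ∨ x ∈ E.arrB ⟨1, one_lt_two⟩ := by
    intro x
    rw [hPBLdef, Finset.mem_union, Finset.mem_filter]
  have hPAXc : ∀ x : A, x ∈ PAX ↔
      (x ∈ (E.trunc one_le_two).Abar 1 ∧ filteredOpt gXA ((E.trunc one_le_two).Abar 1)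
        ((E.trunc one_le_two).Bbar 1) x = none) ∨ x ∈ E.arrA ⟨1, one_lt_two⟩ := by
    intro x
    rw [hPAXdef, Finset.mem_union, Finset.mem_filter]
  have hPBXc : ∀ x : B, x ∈ PBX ↔
      (x ∈ (E.trunc one_le_two).Bbar 1 ∧ filteredOpt gXB ((E.trunc one_le_two).Bbar 1)
        ((E.trunc one_le_two).Abar 1) x = none) ∨ x ∈ E.arrB ⟨1, one_lt_two⟩ := by
    intro x
    rw [hPBXdef, Finset.mem_union, Finset.mem_filter]
  have hPANc : ∀ x : A, x ∈ PAN ↔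
      (x ∈ (E.trunc one_le_two).Abar 1 ∧ filteredOpt gNA ((E.trunc one_le_two).Abar 1)
        ((E.trunc one_le_two).Bbar 1) x = none) ∨ x ∈ E.arrA ⟨1, one_lt_two⟩ := by
    intro x
    rw [hPANdef, Finset.mem_union, Finset.mem_filter]
  have hPBNc : ∀ x : B, x ∈ PBN ↔
      (x ∈ (E.trunc one_le_two).Bbar 1 ∧ filteredOpt gNB ((E.trunc one_le_two).Bbar 1)
        ((E.trunc one_le_two).Abar 1) x = none) ∨ x ∈ E.arrB ⟨1, one_lt_two⟩ := by
    intro x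
    rw [hPBNdef, Finset.mem_union, Finset.mem_filter]
  -- memberships in continuation pools
  have hPAY11 : a11 ∈ PAY := Finset.mem_union_left _ (Finset.mem_filter.2 ⟨hA1_11, hfY11⟩)
  have hPAY21 : a21 ∈ PAY := Finset.mem_union_right _ ((harr1A a21).2 (Or.inl rfl))
  have hPAY22 : a22 ∈ PAY := Finset.mem_union_right _ ((harr1A a22).2 (Or.inr rfl))
  have hPBY21 : b21 ∈ PBY := Finset.mem_union_right _ ((harr1B b21).2 (Or.inl rfl))
  have hPBY22 : b22 ∈ PBY := Finset.mem_union_right _ ((harr1B b22).2 (Or.inr rfl))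
  have hPAYd : ∀ x : A, x ∈ PAY → x = a11 ∨ x = a21 ∨ x = a22 := by
    intro x hx
    rcases Finset.mem_union.1 hx with h | h
    · obtain ⟨h3, h4⟩ := Finset.mem_filter.1 h
      rcases (hA1set x).1 h3 with rfl | rfl
      · exact Or.inl rfl
      · rw [hfY12] at h4; cases h4
    · exact Or.inr ((harr1A x).1 h)
  have hPBYd : ∀ y : B, y ∈ PBY → y = b21 ∨ y = b22 := by
    intro y hy
    rcases Finset.mem_union.1 hy with h | h
    · obtain ⟨h3, h4⟩ := Finset.mem_filter.1 h
      have := (hB1set y).1 h3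
      subst this
      rw [hfYB11] at h4; cases h4
    · exact (harr1B y).1 h
  have hPAL12 : a12 ∈ PAL := Finset.mem_union_left _ (Finset.mem_filter.2 ⟨hA1_12, hfL12⟩)
  have hPAL21 : a21 ∈ PAL := Finset.mem_union_right _ ((harr1A a21).2 (Or.inl rfl))
  have hPAL22 : a22 ∈ PAL := Finset.mem_union_right _ ((harr1A a22).2 (Or.inr rfl))
  have hPBL21 : b21 ∈ PBL := Finset.mem_union_right _ ((harr1B b21).2 (Or.inl rfl))
  have hPBL22 : b22 ∈ PBL := Finset.mem_union_right _ ((harr1B b22).2 (Or.inr rfl))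
  have hPALd : ∀ x : A, x ∈ PAL → x = a12 ∨ x = a21 ∨ x = a22 := by
    intro x hx
    rcases Finset.mem_union.1 hx with h | h
    · obtain ⟨h3, h4⟩ := Finset.mem_filter.1 h
      rcases (hA1set x).1 h3 with rfl | rfl
      · rw [hfL11] at h4; cases h4
      · exact Or.inl rfl
    · exact Or.inr ((harr1A x).1 h)
  have hPBLd : ∀ y : B, y ∈ PBL → y = b21 ∨ y = b22 := by
    intro y hy
    rcases Finset.mem_union.1 hy with h | h
    · obtain ⟨h3, h4⟩ := Finset.mem_filter.1 h
      have := (hB1set y).1 h3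
      subst this
      rw [hfLB11] at h4; cases h4
    · exact (harr1B y).1 h
  have hPAX11 : a11 ∈ PAX := Finset.mem_union_left _ (Finset.mem_filter.2 ⟨hA1_11, hfX11⟩)
  have hPAX21 : a21 ∈ PAX := Finset.mem_union_right _ ((harr1A a21).2 (Or.inl rfl))
  have hPAX22 : a22 ∈ PAX := Finset.mem_union_right _ ((harr1A a22).2 (Or.inr rfl))
  have hPBX21 : b21 ∈ PBX := Finset.mem_union_right _ ((harr1B b21).2 (Or.inl rfl))
  have hPBX22 : b22 ∈ PBX := Finset.mem_union_right _ ((harr1B b22).2 (Or.inr rfl))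
  have hPAXd : ∀ x : A, x ∈ PAX → x = a11 ∨ x = a21 ∨ x = a22 := by
    intro x hx
    rcases Finset.mem_union.1 hx with h | h
    · obtain ⟨h3, h4⟩ := Finset.mem_filter.1 h
      rcases (hA1set x).1 h3 with rfl | rfl
      · exact Or.inl rfl
      · rw [hfX12] at h4; cases h4
    · exact Or.inr ((harr1A x).1 h)
  have hPBXd : ∀ y : B, y ∈ PBX → y = b21 ∨ y = b22 := by
    intro y hy
    rcases Finset.mem_union.1 hy with h | h
    · obtain ⟨h3, h4⟩ := Finset.mem_filter.1 h
      have := (hB1set y).1 h3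
      subst this
      rw [hfXB11] at h4; cases h4
    · exact (harr1B y).1 h
  have hPAN11 : a11 ∈ PAN := Finset.mem_union_left _ (Finset.mem_filter.2 ⟨hA1_11, hfN a11⟩)
  have hPAN12 : a12 ∈ PAN := Finset.mem_union_left _ (Finset.mem_filter.2 ⟨hA1_12, hfN a12⟩)
  have hPAN21 : a21 ∈ PAN := Finset.mem_union_right _ ((harr1A a21).2 (Or.inl rfl))
  have hPAN22 : a22 ∈ PAN := Finset.mem_union_right _ ((harr1A a22).2 (Or.inr rfl))
  have hPBN11 : b11 ∈ PBN := Finset.mem_union_left _ (Finset.mem_filter.2 ⟨hB1_11, hfNB b11⟩)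
  have hPBN21 : b21 ∈ PBN := Finset.mem_union_right _ ((harr1B b21).2 (Or.inl rfl))
  have hPBN22 : b22 ∈ PBN := Finset.mem_union_right _ ((harr1B b22).2 (Or.inr rfl))
  have hPANd : ∀ x : A, x ∈ PAN → x = a11 ∨ x = a12 ∨ x = a21 ∨ x = a22 := by
    intro x hx
    rcases Finset.mem_union.1 hx with h | h
    · rcases (hA1set x).1 (Finset.mem_filter.1 h).1 with rfl | rfl
      · exact Or.inl rfl
      · exact Or.inr (Or.inl rfl)
    · rcases (harr1A x).1 h with rfl | rfl
      · exact Or.inr (Or.inr (Or.inl rfl))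
      · exact Or.inr (Or.inr (Or.inr rfl))
  have hPBNd : ∀ y : B, y ∈ PBN → y = b11 ∨ y = b21 ∨ y = b22 := by
    intro y hy
    rcases Finset.mem_union.1 hy with h | h
    · exact Or.inl ((hB1set y).1 (Finset.mem_filter.1 h).1)
    · exact Or.inr ((harr1B y).1 h)
  -- continuation values
  have hcY11 : filteredOpt gYA PAY PBY a11 = some b22 :=
    filteredOpt_some_of hgY_a11 hPAY11 hPBY22
  have hcY21 : filteredOpt gYA PAY PBY a21 = none := filteredOpt_none hgY_a21
  have hcY22 : filteredOpt gYA PAY PBY a22 = some b21 :=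
    filteredOpt_some_of hgY_a22 hPAY22 hPBY21
  have hcYB21 : filteredOpt gYB PBY PAY b21 = some a22 :=
    filteredOpt_some_of hgYB_b21 hPBY21 hPAY22
  have hcYB22 : filteredOpt gYB PBY PAY b22 = some a11 :=
    filteredOpt_some_of hgYB_b22 hPBY22 hPAY11
  have hcL12 : filteredOpt gLA PAL PBL a12 = none := filteredOpt_none hgL_a12
  have hcL21 : filteredOpt gLA PAL PBL a21 = some b21 :=
    filteredOpt_some_of hgL_a21 hPAL21 hPBL21
  have hcL22 : filteredOpt gLA PAL PBL a22 = some b22 :=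
    filteredOpt_some_of hgL_a22 hPAL22 hPBL22
  have hcLB21 : filteredOpt gLB PBL PAL b21 = some a21 :=
    filteredOpt_some_of hgLB_b21 hPBL21 hPAL21
  have hcLB22 : filteredOpt gLB PBL PAL b22 = some a22 :=
    filteredOpt_some_of hgLB_b22 hPBL22 hPAL22
  have hcX11 : filteredOpt gXA PAX PBX a11 = some b21 :=
    filteredOpt_some_of hgX_a11 hPAX11 hPBX21
  have hcX21 : filteredOpt gXA PAX PBX a21 = none := filteredOpt_none hgX_a21
  have hcX22 : filteredOpt gXA PAX PBX a22 = some b22 :=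
    filteredOpt_some_of hgX_a22 hPAX22 hPBX22
  have hcXB21 : filteredOpt gXB PBX PAX b21 = some a11 :=
    filteredOpt_some_of hgXB_b21 hPBX21 hPAX11
  have hcXB22 : filteredOpt gXB PBX PAX b22 = some a22 :=
    filteredOpt_some_of hgXB_b22 hPBX22 hPAX22
  have hcN11 : filteredOpt gYA PAN PBN a11 = some b22 :=
    filteredOpt_some_of hgY_a11 hPAN11 hPBN22
  have hcN12 : filteredOpt gYA PAN PBN a12 = some b11 :=
    filteredOpt_some_of hgY_a12 hPAN12 hPBN11
  have hcN21 : filteredOpt gYA PAN PBN a21 = none := filteredOpt_none hgY_a21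
  have hcN22 : filteredOpt gYA PAN PBN a22 = some b21 :=
    filteredOpt_some_of hgY_a22 hPAN22 hPBN21
  have hcNB11 : filteredOpt gYB PBN PAN b11 = some a12 :=
    filteredOpt_some_of hgYB_b11 hPBN11 hPAN12
  have hcNB21 : filteredOpt gYB PBN PAN b21 = some a22 :=
    filteredOpt_some_of hgYB_b21 hPBN21 hPAN22
  have hcNB22 : filteredOpt gYB PBN PAN b22 = some a11 :=
    filteredOpt_some_of hgYB_b22 hPBN22 hPAN11
  -- blocking-free continuation matchings
  have HYNB2 : ¬ ∃ a ∈ PAY, ∃ b ∈ PBY,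
      (filteredOpt gYA PAY PBY a).elim 0 (M.u a) < M.u a b ∧
      (filteredOpt gYB PBY PAY b).elim 0 (fun a' => M.v a' b) < M.v a b := by
    rintro ⟨a, ha, b, hb, h1, h2⟩
    rcases hPAYd a ha with rfl | rfl | rfl
    · rcases hPBYd b hb with rfl | rfl
      · rw [hcYB21] at h2; simp only [Option.elim_some] at h2; linarith
      · rw [hcY11] at h1; simp only [Option.elim_some] at h1; linarith
    · rcases hPBYd b hb with rfl | rfl
      · rw [hcYB21] at h2; simp only [Option.elim_some] at h2; linarith
      · rw [hcY21] at h1; simp only [Option.elim_none] at h1; linarith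
    · rcases hPBYd b hb with rfl | rfl
      · rw [hcY22] at h1; simp only [Option.elim_some] at h1; linarith
      · rw [hcYB22] at h2; simp only [Option.elim_some] at h2; linarith
  have HLNB2 : ¬ ∃ a ∈ PAL, ∃ b ∈ PBL,
      (filteredOpt gLA PAL PBL a).elim 0 (M.u a) < M.u a b ∧
      (filteredOpt gLB PBL PAL b).elim 0 (fun a' => M.v a' b) < M.v a b := by
    rintro ⟨a, ha, b, hb, h1, h2⟩
    rcases hPALd a ha with rfl | rfl | rfl
    · rcases hPBLd b hb with rfl | rfl
      · rw [hcL12] at h1; simp only [Option.elim_none] at h1; linarith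
      · rw [hcL12] at h1; simp only [Option.elim_none] at h1; linarith
    · rcases hPBLd b hb with rfl | rfl
      · rw [hcL21] at h1; simp only [Option.elim_some] at h1; linarith
      · rw [hcL21] at h1; simp only [Option.elim_some] at h1; linarith
    · rcases hPBLd b hb with rfl | rfl
      · rw [hcL22] at h1; simp only [Option.elim_some] at h1; linarith
      · rw [hcL22] at h1; simp only [Option.elim_some] at h1; linarith
  have HXNB2 : ¬ ∃ a ∈ PAX, ∃ b ∈ PBX,
      (filteredOpt gXA PAX PBX a).elim 0 (M.u a) < M.u a b ∧
      (filteredOpt gXB PBX PAX b).elim 0 (fun a' => M.v a' b) < M.v a b := by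
    rintro ⟨a, ha, b, hb, h1, h2⟩
    rcases hPAXd a ha with rfl | rfl | rfl
    · rcases hPBXd b hb with rfl | rfl
      · rw [hcX11] at h1; simp only [Option.elim_some] at h1; linarith
      · rw [hcX11] at h1; simp only [Option.elim_some] at h1; linarith
    · rcases hPBXd b hb with rfl | rfl
      · rw [hcXB21] at h2; simp only [Option.elim_some] at h2; linarith
      · rw [hcX21] at h1; simp only [Option.elim_none] at h1; linarith
    · rcases hPBXd b hb with rfl | rfl
      · rw [hcX22] at h1; simp only [Option.elim_some] at h1; linarith
      · rw [hcX22] at h1; simp only [Option.elim_some] at h1; linarith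
  have HNNB2 : ¬ ∃ a ∈ PAN, ∃ b ∈ PBN,
      (filteredOpt gYA PAN PBN a).elim 0 (M.u a) < M.u a b ∧
      (filteredOpt gYB PBN PAN b).elim 0 (fun a' => M.v a' b) < M.v a b := by
    rintro ⟨a, ha, b, hb, h1, h2⟩
    rcases hPANd a ha with rfl | rfl | rfl | rfl
    · rcases hPBNd b hb with rfl | rfl | rfl
      · rw [hcN11] at h1; simp only [Option.elim_some] at h1; linarith
      · rw [hcNB21] at h2; simp only [Option.elim_some] at h2; linarith
      · rw [hcN11] at h1; simp only [Option.elim_some] at h1; linarith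
    · rcases hPBNd b hb with rfl | rfl | rfl
      · rw [hcN12] at h1; simp only [Option.elim_some] at h1; linarith
      · rw [hcN12] at h1; simp only [Option.elim_some] at h1; linarith
      · rw [hcN12] at h1; simp only [Option.elim_some] at h1; linarith
    · rcases hPBNd b hb with rfl | rfl | rfl
      · rw [hcN21] at h1; simp only [Option.elim_none] at h1; linarith
      · rw [hcNB21] at h2; simp only [Option.elim_some] at h2; linarith
      · rw [hcN21] at h1; simp only [Option.elim_none] at h1; linarith
    · rcases hPBNd b hb with rfl | rfl | rfl
      · rw [hcN22] at h1; simp only [Option.elim_some] at h1; linarith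
      · rw [hcN22] at h1; simp only [Option.elim_some] at h1; linarith
      · rw [hcNB22] at h2; simp only [Option.elim_some] at h2; linarith
  -- restatements of the period-1 matchings for proof-irrelevant use
  have hL1_11' : (mL.pm (E.trunc one_le_two)).mA a11 = some b11 := hL1_11
  have hL1_12' : (mL.pm (E.trunc one_le_two)).mA a12 = none := hL1_12
  have hR1_11' : (mR.pm (E.trunc one_le_two)).mA a11 = none := hR1_11
  have hR1_12' : (mR.pm (E.trunc one_le_two)).mA a12 = some b11 := hR1_12
  have hL1B11 : (mL.pm (E.trunc one_le_two)).mB b11 = some a11 :=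
    ((mL.pm (E.trunc one_le_two)).inv a11 b11).1 hL1_11'
  have hR1B11 : (mR.pm (E.trunc one_le_two)).mB b11 = some a12 :=
    ((mR.pm (E.trunc one_le_two)).inv a12 b11).1 hR1_12'
  have hLEmB11 : (mL.pm E).mB b11 = some a11 := ((mL.pm E).inv a11 b11).1 hL2_11
  have hLEmB21 : (mL.pm E).mB b21 = some a21 := ((mL.pm E).inv a21 b21).1 hL2_21
  have hLEmB22 : (mL.pm E).mB b22 = some a22 := ((mL.pm E).inv a22 b22).1 hL2_22
  have hREmB11 : (mR.pm E).mB b11 = some a12 := ((mR.pm E).inv a12 b11).1 hR2_12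
  have hREmB21 : (mR.pm E).mB b21 = some a11 := ((mR.pm E).inv a11 b21).1 hR2_11
  have hREmB22 : (mR.pm E).mB b22 = some a22 := ((mR.pm E).inv a22 b22).1 hR2_22
  -- payoff computations at the period-1 realization
  have hUpL11 : Upay M G mL a11 (E.trunc one_le_two) = M.u a11 b11 := by
    rw [Upay_dirac M G E hP (E.trunc one_le_two) hE1F mL a11,
      matchTimeA_one_some mL E a11 (by rw [hL1_11']; rfl)]
    simp [hL2_11]
  have hUpL12 : Upay M G mL a12 (E.trunc one_le_two) = 0 := by
    rw [Upay_dirac M G E hP (E.trunc one_le_two) hE1F mL a12,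
      matchTimeA_one_none mL E a12 hL1_12']
    simp [hL2_12]
  have hVpL11 : Vpay M G mL b11 (E.trunc one_le_two) = M.v a11 b11 := by
    rw [Vpay_dirac M G E hP (E.trunc one_le_two) hE1F mL b11,
      matchTimeB_one_some mL E b11 (by rw [hL1B11]; rfl)]
    simp [hLEmB11]
  have hUpR11 : Upay M G mR a11 (E.trunc one_le_two) = M.dA a11 * M.u a11 b21 := by
    rw [Upay_dirac M G E hP (E.trunc one_le_two) hE1F mR a11,
      matchTimeA_one_none mR E a11 hR1_11']
    simp [hR2_11]
  have hUpR12 : Upay M G mR a12 (E.trunc one_le_two) = M.u a12 b11 := by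
    rw [Upay_dirac M G E hP (E.trunc one_le_two) hE1F mR a12,
      matchTimeA_one_some mR E a12 (by rw [hR1_12']; rfl)]
    simp [hR2_12]
  have hVpR11 : Vpay M G mR b11 (E.trunc one_le_two) = M.v a12 b11 := by
    rw [Vpay_dirac M G E hP (E.trunc one_le_two) hE1F mR b11,
      matchTimeB_one_some mR E b11 (by rw [hR1B11]; rfl)]
    simp [hREmB11]
  -- payoff bounds for the conjectures
  have hpayL11 : M.dA a11 * ((filteredOpt gYA (E.Abar 2) (E.Bbar 2) a11).elim 0 (M.u a11)) ≤
      Upay M G mL a11 (E.trunc one_le_two) := by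
    rw [filteredOpt_some_of hgY_a11 hA2_11 hB2_22, hUpL11]
    simp only [Option.elim_some]
    exact h11_3.le
  have hpayL12 : M.dA a12 * ((filteredOpt gLA (E.Abar 2) (E.Bbar 2) a12).elim 0 (M.u a12)) ≤
      Upay M G mL a12 (E.trunc one_le_two) := by
    rw [filteredOpt_none hgL_a12, hUpL12]
    simp
  have hpayR11 : M.dA a11 * ((filteredOpt gXA (E.Abar 2) (E.Bbar 2) a11).elim 0 (M.u a11)) ≤
      Upay M G mR a11 (E.trunc one_le_two) := by
    rw [filteredOpt_some_of hgX_a11 hA2_11 hB2_21, hUpR11]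
    simp only [Option.elim_some]
    exact le_refl _
  have hpayR12 : M.dA a12 * ((filteredOpt gLA (E.Abar 2) (E.Bbar 2) a12).elim 0 (M.u a12)) ≤
      Upay M G mR a12 (E.trunc one_le_two) := by
    rw [filteredOpt_none hgL_a12, hUpR12]
    simp only [Option.elim_none, mul_zero]
    exact h12_1.le
  have hpayBL : M.dB b11 * ((filteredOpt gYB (E.Bbar 2) (E.Abar 2) b11).elim 0
      (fun a => M.v a b11)) ≤ Vpay M G mL b11 (E.trunc one_le_two) := by
    rw [filteredOpt_some_of hgYB_b11 hB2_11 hA2_12, hVpL11]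
    simp only [Option.elim_some]
    nlinarith [mul_nonneg (sub_nonneg.2 (M.dB_lt_one b11).le) hb11_2.le]
  have hpayBR : M.dB b11 * ((filteredOpt gYB (E.Bbar 2) (E.Abar 2) b11).elim 0
      (fun a => M.v a b11)) ≤ Vpay M G mR b11 (E.trunc one_le_two) := by
    rw [filteredOpt_some_of hgYB_b11 hB2_11 hA2_12, hVpR11]
    simp only [Option.elim_some]
    nlinarith [mul_nonneg (sub_nonneg.2 (M.dB_lt_one b11).le) hb11_2.le]
  -- the four conjecture calls
  have HYcall : ∃ mbar ∈ ConjA M G (E.trunc one_le_two) mL a11 (DynStable M (2 - 1)),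
      Upay M G mbar a11 (E.trunc one_le_two) ≤ Upay M G mL a11 (E.trunc one_le_two) := by
    refine conjA_exists M G E mL (E.trunc one_le_two) gYA gYB hgYinv gYA gYB hgYinv
      (fun _ _ h => h) hP hE1F ?_ ?_ ?_ ?_ ?_ ?_ ?_ PAY PBY hPAYc hPBYc ?_ a11 hfY11 hpayL11
    · intro a b h
      obtain ⟨hg, ha, hb⟩ := filteredOpt_eq_some.1 h
      rw [hgYAdef] at hg
      rcases (tri_eq_some hA1 hA3 hA5).1 hg with ⟨rfl, rfl⟩ | ⟨rfl, rfl⟩ | ⟨rfl, rfl⟩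
      · exact absurd hb hB1n22
      · exact h12_1.le
      · exact absurd hb hB1n21
    · intro b a h
      obtain ⟨hg, hb, ha⟩ := filteredOpt_eq_some.1 h
      rw [hgYBdef] at hg
      rcases (tri_eq_some (Ne.symm hB2) (Ne.symm hB3) hB1).1 hg with
        ⟨rfl, rfl⟩ | ⟨rfl, rfl⟩ | ⟨rfl, rfl⟩
      · exact absurd hb hB1n22
      · exact hb11_2.le
      · exact absurd hb hB1n21
    · rintro ⟨a, ha, b, hb, hsA, hsB, h1, h2⟩
      have hbb := (hB1set b).1 hb
      subst hbb
      rcases (hA1set a).1 ha with rfl | rfl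
      · rw [hfY11] at hsA; simp at hsA
      · rw [hfY12] at h1
        simp only [Option.elim_some] at h1
        exact absurd h1 (lt_irrefl _)
    · intro a b hg h1
      rw [hgYAdef] at hg
      rcases (tri_eq_some hA1 hA3 hA5).1 hg with ⟨rfl, rfl⟩ | ⟨rfl, rfl⟩ | ⟨rfl, rfl⟩
      · exact Or.inr hB1n22
      · rw [hfY12] at h1; cases h1
      · exact Or.inr hB1n21
    · intro b a hg h1
      rw [hgYBdef] at hg
      rcases (tri_eq_some (Ne.symm hB2) (Ne.symm hB3) hB1).1 hg with
        ⟨rfl, rfl⟩ | ⟨rfl, rfl⟩ | ⟨rfl, rfl⟩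
      · exact Or.inl hfY11
      · rw [hfYB11] at h1; cases h1
      · exact Or.inr hA1n22
    · intro a b hg
      rw [hgYAdef] at hg
      rcases (tri_eq_some hA1 hA3 hA5).1 hg with ⟨rfl, rfl⟩ | ⟨rfl, rfl⟩ | ⟨rfl, rfl⟩
      · exact hu11b22.le
      · exact h12_1.le
      · exact h22_2.le
    · intro b a hg
      rw [hgYBdef] at hg
      rcases (tri_eq_some (Ne.symm hB2) (Ne.symm hB3) hB1).1 hg with
        ⟨rfl, rfl⟩ | ⟨rfl, rfl⟩ | ⟨rfl, rfl⟩
      · exact hv11b22.le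
      · exact hb11_2.le
      · exact hv22b21.le
    · exact HYNB2
  have HXcall : ∃ mbar ∈ ConjA M G (E.trunc one_le_two) mR a11 (DynStable M (2 - 1)),
      Upay M G mbar a11 (E.trunc one_le_two) ≤ Upay M G mR a11 (E.trunc one_le_two) := by
    refine conjA_exists M G E mR (E.trunc one_le_two) gXA gXB hgXinv gXA gXB hgXinv
      (fun _ _ h => h) hP hE1F ?_ ?_ ?_ ?_ ?_ ?_ ?_ PAX PBX hPAXc hPBXc ?_ a11 hfX11 hpayR11
    · intro a b h
      obtain ⟨hg, ha, hb⟩ := filteredOpt_eq_some.1 h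
      rw [hgXAdef] at hg
      rcases (tri_eq_some hA1 hA3 hA5).1 hg with ⟨rfl, rfl⟩ | ⟨rfl, rfl⟩ | ⟨rfl, rfl⟩
      · exact absurd hb hB1n21
      · exact h12_1.le
      · exact absurd hb hB1n22
    · intro b a h
      obtain ⟨hg, hb, ha⟩ := filteredOpt_eq_some.1 h
      rw [hgXBdef] at hg
      rcases (tri_eq_some (Ne.symm hB1) hB3 hB2).1 hg with
        ⟨rfl, rfl⟩ | ⟨rfl, rfl⟩ | ⟨rfl, rfl⟩
      · exact absurd hb hB1n21
      · exact hb11_2.le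
      · exact absurd hb hB1n22
    · rintro ⟨a, ha, b, hb, hsA, hsB, h1, h2⟩
      have hbb := (hB1set b).1 hb
      subst hbb
      rcases (hA1set a).1 ha with rfl | rfl
      · rw [hfX11] at hsA; simp at hsA
      · rw [hfX12] at h1
        simp only [Option.elim_some] at h1
        exact absurd h1 (lt_irrefl _)
    · intro a b hg h1
      rw [hgXAdef] at hg
      rcases (tri_eq_some hA1 hA3 hA5).1 hg with ⟨rfl, rfl⟩ | ⟨rfl, rfl⟩ | ⟨rfl, rfl⟩
      · exact Or.inr hB1n21
      · rw [hfX12] at h1; cases h1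
      · exact Or.inr hB1n22
    · intro b a hg h1
      rw [hgXBdef] at hg
      rcases (tri_eq_some (Ne.symm hB1) hB3 hB2).1 hg with
        ⟨rfl, rfl⟩ | ⟨rfl, rfl⟩ | ⟨rfl, rfl⟩
      · exact Or.inl hfX11
      · rw [hfXB11] at h1; cases h1
      · exact Or.inr hA1n22
    · intro a b hg
      rw [hgXAdef] at hg
      rcases (tri_eq_some hA1 hA3 hA5).1 hg with ⟨rfl, rfl⟩ | ⟨rfl, rfl⟩ | ⟨rfl, rfl⟩
      · exact hu11b21.le
      · exact h12_1.le
      · exact hu22b22.le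
    · intro b a hg
      rw [hgXBdef] at hg
      rcases (tri_eq_some (Ne.symm hB1) hB3 hB2).1 hg with
        ⟨rfl, rfl⟩ | ⟨rfl, rfl⟩ | ⟨rfl, rfl⟩
      · exact hv11b21.le
      · exact hb11_2.le
      · exact hb22_2.le
    · exact HXNB2
  have HLcall : ∀ m : Matching A B,
      M.dA a12 * ((filteredOpt gLA (E.Abar 2) (E.Bbar 2) a12).elim 0 (M.u a12)) ≤
        Upay M G m a12 (E.trunc one_le_two) →
      ∃ mbar ∈ ConjA M G (E.trunc one_le_two) m a12 (DynStable M (2 - 1)),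
        Upay M G mbar a12 (E.trunc one_le_two) ≤ Upay M G m a12 (E.trunc one_le_two) := by
    intro m hpay
    refine conjA_exists M G E m (E.trunc one_le_two) gLA gLB hgLinv gLA gLB hgLinv
      (fun _ _ h => h) hP hE1F ?_ ?_ ?_ ?_ ?_ ?_ ?_ PAL PBL hPALc hPBLc ?_ a12 hfL12 hpay
    · intro a b h
      obtain ⟨hg, ha, hb⟩ := filteredOpt_eq_some.1 h
      rw [hgLAdef] at hg
      rcases (tri_eq_some hA2 hA3 hA6).1 hg with ⟨rfl, rfl⟩ | ⟨rfl, rfl⟩ | ⟨rfl, rfl⟩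
      · exact hu11b11.le
      · exact absurd ha hA1n21
      · exact absurd ha hA1n22
    · intro b a h
      obtain ⟨hg, hb, ha⟩ := filteredOpt_eq_some.1 h
      rw [hgLBdef] at hg
      rcases (tri_eq_some hB1 hB2 hB3).1 hg with ⟨rfl, rfl⟩ | ⟨rfl, rfl⟩ | ⟨rfl, rfl⟩
      · exact hv11b11.le
      · exact absurd hb hB1n21
      · exact absurd hb hB1n22
    · rintro ⟨a, ha, b, hb, hsA, hsB, h1, h2⟩
      have hbb := (hB1set b).1 hb
      subst hbb
      rcases (hA1set a).1 ha with rfl | rfl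
      · rw [hfL11] at h1
        simp only [Option.elim_some] at h1
        exact absurd h1 (lt_irrefl _)
      · rw [hfL12] at hsA; simp at hsA
    · intro a b hg h1
      rw [hgLAdef] at hg
      rcases (tri_eq_some hA2 hA3 hA6).1 hg with ⟨rfl, rfl⟩ | ⟨rfl, rfl⟩ | ⟨rfl, rfl⟩
      · rw [hfL11] at h1; cases h1
      · exact Or.inr hB1n21
      · exact Or.inr hB1n22
    · intro b a hg h1
      rw [hgLBdef] at hg
      rcases (tri_eq_some hB1 hB2 hB3).1 hg with ⟨rfl, rfl⟩ | ⟨rfl, rfl⟩ | ⟨rfl, rfl⟩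
      · rw [hfLB11] at h1; cases h1
      · exact Or.inr hA1n21
      · exact Or.inr hA1n22
    · intro a b hg
      rw [hgLAdef] at hg
      rcases (tri_eq_some hA2 hA3 hA6).1 hg with ⟨rfl, rfl⟩ | ⟨rfl, rfl⟩ | ⟨rfl, rfl⟩
      · exact hu11b11.le
      · exact h21_1.le
      · exact hu22b22.le
    · intro b a hg
      rw [hgLBdef] at hg
      rcases (tri_eq_some hB1 hB2 hB3).1 hg with ⟨rfl, rfl⟩ | ⟨rfl, rfl⟩ | ⟨rfl, rfl⟩
      · exact hv11b11.le
      · exact hb21_3.le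
      · exact hb22_2.le
    · exact HLNB2
  have HNcall : ∀ m : Matching A B,
      M.dB b11 * ((filteredOpt gYB (E.Bbar 2) (E.Abar 2) b11).elim 0
        (fun a => M.v a b11)) ≤ Vpay M G m b11 (E.trunc one_le_two) →
      ∃ mbar ∈ ConjB M G (E.trunc one_le_two) m b11 (DynStable M (2 - 1)),
        Vpay M G mbar b11 (E.trunc one_le_two) ≤ Vpay M G m b11 (E.trunc one_le_two) := by
    intro m hpay
    refine conjB_exists M G E m (E.trunc one_le_two) gNA gNB hgNinv gYA gYB hgYinv
      hcompN hP hE1F ?_ ?_ ?_ ?_ ?_ ?_ ?_ PAN PBN hPANc hPBNc ?_ b11 (hfNB b11) hpay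
    · intro a b h
      obtain ⟨hg, -, -⟩ := filteredOpt_eq_some.1 h
      rw [hgNAdef] at hg
      cases hg
    · intro b a h
      obtain ⟨hg, -, -⟩ := filteredOpt_eq_some.1 h
      rw [hgNBdef] at hg
      cases hg
    · rintro ⟨a, ha, b, hb, hsA, hsB, h1, h2⟩
      rw [hfN a] at hsA
      simp at hsA
    · intro a b hg h1
      exact Or.inl (hfNB b)
    · intro b a hg h1
      exact Or.inl (hfN a)
    · intro a b hg
      rw [hgYAdef] at hg
      rcases (tri_eq_some hA1 hA3 hA5).1 hg with ⟨rfl, rfl⟩ | ⟨rfl, rfl⟩ | ⟨rfl, rfl⟩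
      · exact hu11b22.le
      · exact h12_1.le
      · exact h22_2.le
    · intro b a hg
      rw [hgYBdef] at hg
      rcases (tri_eq_some (Ne.symm hB2) (Ne.symm hB3) hB1).1 hg with
        ⟨rfl, rfl⟩ | ⟨rfl, rfl⟩ | ⟨rfl, rfl⟩
      · exact hv11b22.le
      · exact hb11_2.le
      · exact hv22b21.le
    · exact HNNB2
  -- last-period hypotheses for mL
  have HL2IRA : ∀ a ∈ availA mL E, 0 ≤ ((mL.pm E).mA a).elim 0 (M.u a) := by
    intro a ha
    have hmem := (mem_availA_iff _ E a).1 ha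
    rcases (hA2set a).1 hmem.1 with haa | haa | haa | haa
    · have h' : (mL.pm (E.trunc (Nat.sub_le 2 1))).mA a11 = some b11 := hL1_11
      have h2 := hmem.2
      rw [haa, h'] at h2
      cases h2
    · rw [haa, hL2_12]; simp
    · rw [haa, hL2_21]; simp only [Option.elim_some]; exact h21_1.le
    · rw [haa, hL2_22]; simp only [Option.elim_some]; exact hu22b22.le
  have HL2IRB : ∀ b ∈ availB mL E, 0 ≤ ((mL.pm E).mB b).elim 0 (fun a => M.v a b) := by
    intro b hb
    have hmem := (mem_availB_iff _ E b).1 hb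
    rcases (hB2set b).1 hmem.1 with hbb | hbb | hbb
    · have h' : (mL.pm (E.trunc (Nat.sub_le 2 1))).mB b11 = some a11 := hL1B11
      have h2 := hmem.2
      rw [hbb, h'] at h2
      cases h2
    · rw [hbb, hLEmB21]; simp only [Option.elim_some]; exact hb21_3.le
    · rw [hbb, hLEmB22]; simp only [Option.elim_some]; exact hb22_2.le
  have HL2NB : ¬ ∃ a ∈ availA mL E, ∃ b ∈ availB mL E,
      ((mL.pm E).mA a).elim 0 (M.u a) < M.u a b ∧
      ((mL.pm E).mB b).elim 0 (fun a' => M.v a' b) < M.v a b := by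
    rintro ⟨a, ha, b, hb, h1, h2⟩
    have hmA := (mem_availA_iff _ E a).1 ha
    have hmB := (mem_availB_iff _ E b).1 hb
    have hbcase : b = b21 ∨ b = b22 := by
      rcases (hB2set b).1 hmB.1 with hbb | hbb | hbb
      · have h' : (mL.pm (E.trunc (Nat.sub_le 2 1))).mB b11 = some a11 := hL1B11
        have h2' := hmB.2
        rw [hbb, h'] at h2'
        cases h2'
      · exact Or.inl hbb
      · exact Or.inr hbb
    rcases (hA2set a).1 hmA.1 with haa | haa | haa | haa
    · have h' : (mL.pm (E.trunc (Nat.sub_le 2 1))).mA a11 = some b11 := hL1_11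
      have h2' := hmA.2
      rw [haa, h'] at h2'
      cases h2'
    · rw [haa, hL2_12] at h1
      simp only [Option.elim_none] at h1
      rcases hbcase with rfl | rfl
      · linarith
      · linarith
    · rw [haa, hL2_21] at h1
      simp only [Option.elim_some] at h1
      rcases hbcase with hbb | hbb <;> rw [hbb] at h1
      · linarith
      · linarith
    · rw [haa, hL2_22] at h1
      simp only [Option.elim_some] at h1
      rcases hbcase with hbb | hbb <;> rw [hbb] at h1
      · linarith
      · linarith
  -- last-period hypotheses for mR
  have HR2IRA : ∀ a ∈ availA mR E, 0 ≤ ((mR.pm E).mA a).elim 0 (M.u a) := by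
    intro a ha
    have hmem := (mem_availA_iff _ E a).1 ha
    rcases (hA2set a).1 hmem.1 with haa | haa | haa | haa
    · rw [haa, hR2_11]; simp only [Option.elim_some]; exact hu11b21.le
    · have h' : (mR.pm (E.trunc (Nat.sub_le 2 1))).mA a12 = some b11 := hR1_12
      have h2 := hmem.2
      rw [haa, h'] at h2
      cases h2
    · rw [haa, hR2_21]; simp
    · rw [haa, hR2_22]; simp only [Option.elim_some]; exact hu22b22.le
  have HR2IRB : ∀ b ∈ availB mR E, 0 ≤ ((mR.pm E).mB b).elim 0 (fun a => M.v a b) := by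
    intro b hb
    have hmem := (mem_availB_iff _ E b).1 hb
    rcases (hB2set b).1 hmem.1 with hbb | hbb | hbb
    · have h' : (mR.pm (E.trunc (Nat.sub_le 2 1))).mB b11 = some a12 := hR1B11
      have h2 := hmem.2
      rw [hbb, h'] at h2
      cases h2
    · rw [hbb, hREmB21]; simp only [Option.elim_some]; exact hv11b21.le
    · rw [hbb, hREmB22]; simp only [Option.elim_some]; exact hb22_2.le
  have HR2NB : ¬ ∃ a ∈ availA mR E, ∃ b ∈ availB mR E,
      ((mR.pm E).mA a).elim 0 (M.u a) < M.u a b ∧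
      ((mR.pm E).mB b).elim 0 (fun a' => M.v a' b) < M.v a b := by
    rintro ⟨a, ha, b, hb, h1, h2⟩
    have hmA := (mem_availA_iff _ E a).1 ha
    have hmB := (mem_availB_iff _ E b).1 hb
    have hbcase : b = b21 ∨ b = b22 := by
      rcases (hB2set b).1 hmB.1 with hbb | hbb | hbb
      · have h' : (mR.pm (E.trunc (Nat.sub_le 2 1))).mB b11 = some a12 := hR1B11
        have h2' := hmB.2
        rw [hbb, h'] at h2'
        cases h2'
      · exact Or.inl hbb
      · exact Or.inr hbb
    rcases (hA2set a).1 hmA.1 with haa | haa | haa | haa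
    · rw [haa, hR2_11] at h1
      simp only [Option.elim_some] at h1
      rcases hbcase with hbb | hbb <;> rw [hbb] at h1
      · linarith
      · linarith
    · have h' : (mR.pm (E.trunc (Nat.sub_le 2 1))).mA a12 = some b11 := hR1_12
      have h2' := hmA.2
      rw [haa, h'] at h2'
      cases h2'
    · rw [haa, hR2_21] at h1
      simp only [Option.elim_none] at h1
      rcases hbcase with hbb | hbb
      · rw [haa, hbb] at h2
        rw [hREmB21] at h2
        simp only [Option.elim_some] at h2
        linarith
      · rw [hbb] at h1
        linarith
    · rw [haa, hR2_22] at h1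
      simp only [Option.elim_some] at h1
      rcases hbcase with hbb | hbb <;> rw [hbb] at h1
      · linarith
      · linarith
  -- assemble
  refine ⟨?_, ?_, hL2_12, ?_, hR2_21, ?_⟩
  · -- mL dynamically stable
    rw [DynStable]
    intro t ht1 ht2 Et hsupp
    obtain ⟨F0, ⟨hle0, heq0⟩, hpos0⟩ := hsupp
    have hF0 : F0 = E := by
      by_contra hne
      rw [hP] at hpos0
      simp [hne] at hpos0
    rw [hF0] at heq0
    interval_cases t
    · subst heq0
      refine ⟨?_, ?_, ?_⟩
      · intro a ha
        rcases (hA1set a).1 ((mem_availA_iff _ _ a).1 ha).1 with haa | haa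
        · rw [haa]; exact HYcall
        · rw [haa]; exact HLcall mL hpayL12
      · intro b hb
        have hbb := (hB1set b).1 ((mem_availB_iff _ _ b).1 hb).1
        rw [hbb]
        exact HNcall mL hpayBL
      · rintro ⟨a, ha, b, hb, h1, h2⟩
        have hbb := (hB1set b).1 ((mem_availB_iff _ _ b).1 hb).1
        rcases (hA1set a).1 ((mem_availA_iff _ _ a).1 ha).1 with haa | haa
        · rw [haa, hbb] at h1
          have h1' : Upay M G mL a11 (E.trunc one_le_two) < M.u a11 b11 := h1
          rw [hUpL11] at h1'
          exact absurd h1' (lt_irrefl _)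
        · rw [haa, hbb] at h2
          have h2' : Vpay M G mL b11 (E.trunc one_le_two) < M.v a12 b11 := h2
          rw [hVpL11] at h2'
          linarith
    · rw [trunc_self] at heq0
      rw [← heq0]
      exact lastStep M G E hP mL HL2IRA HL2IRB HL2NB
  · -- mR dynamically stable
    rw [DynStable]
    intro t ht1 ht2 Et hsupp
    obtain ⟨F0, ⟨hle0, heq0⟩, hpos0⟩ := hsupp
    have hF0 : F0 = E := by
      by_contra hne
      rw [hP] at hpos0
      simp [hne] at hpos0
    rw [hF0] at heq0
    interval_cases t
    · subst heq0
      refine ⟨?_, ?_, ?_⟩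
      · intro a ha
        rcases (hA1set a).1 ((mem_availA_iff _ _ a).1 ha).1 with haa | haa
        · rw [haa]; exact HXcall
        · rw [haa]; exact HLcall mR hpayR12
      · intro b hb
        have hbb := (hB1set b).1 ((mem_availB_iff _ _ b).1 hb).1
        rw [hbb]
        exact HNcall mR hpayBR
      · rintro ⟨a, ha, b, hb, h1, h2⟩
        have hbb := (hB1set b).1 ((mem_availB_iff _ _ b).1 hb).1
        rcases (hA1set a).1 ((mem_availA_iff _ _ a).1 ha).1 with haa | haa
        · rw [haa, hbb] at h1
          have h1' : Upay M G mR a11 (E.trunc one_le_two) < M.u a11 b11 := h1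
          rw [hUpR11] at h1'
          linarith
        · rw [haa, hbb] at h2
          have h2' : Vpay M G mR b11 (E.trunc one_le_two) < M.v a12 b11 := h2
          rw [hVpR11] at h2'
          exact absurd h2' (lt_irrefl _)
    · rw [trunc_self] at heq0
      rw [← heq0]
      exact lastStep M G E hP mR HR2IRA HR2IRB HR2NB
  · rw [hR2_12]
    simp
  · rw [hL2_21]
    simp

end DynMatch
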